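/- arXiv:1309.4594 — 8 statements merged into one kernel-verified Lean document; each statement's English description precedes it below -/
import Mathlib

section
/- For every complex number z, |(1 − z)·exp(z)| ≤ exp(|z|²/2). -/
theorem abs_one_sub_mul_exp_le (z : ℂ) :
    ‖(1 - z) * Complex.exp z‖ ≤ Real.exp (‖z‖ ^ 2 / 2) := by
  have h1 : ‖1 - z‖ ^ 2 = 1 - 2 * z.re + ‖z‖ ^ 2 := by
    rw [Complex.sq_norm, Complex.sq_norm, Complex.normSq_apply, Complex.normSq_apply]
    simp [Complex.sub_re, Complex.sub_im]
    ring
  have hsq : ‖(1 - z) * Complex.exp z‖ ^ 2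
      ≤ Real.exp (‖z‖ ^ 2 / 2) ^ 2 := by
    rw [norm_mul, mul_pow, Complex.norm_exp, h1, ← Real.exp_nat_mul, ← Real.exp_nat_mul]
    have key : 1 - 2 * z.re + ‖z‖ ^ 2
        ≤ Real.exp (‖z‖ ^ 2 - 2 * z.re) := by
      have := Real.add_one_le_exp (‖z‖ ^ 2 - 2 * z.re)
      linarith
    calc (1 - 2 * z.re + ‖z‖ ^ 2) * Real.exp ((2 : ℕ) * z.re)
        ≤ Real.exp (‖z‖ ^ 2 - 2 * z.re) * Real.exp ((2 : ℕ) * z.re) := by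
          apply mul_le_mul_of_nonneg_right key (Real.exp_nonneg _)
      _ = Real.exp ((2 : ℕ) * (‖z‖ ^ 2 / 2)) := by
          rw [← Real.exp_add]; ring_nf
  nlinarith [norm_nonneg ((1 - z) * Complex.exp z), Real.exp_nonneg (‖z‖ ^ 2 / 2)]
end

section
/- Let w ∈ 𝔻 \ {0} and set z := w + w⁻¹. Then (1/2)·|w²−1|·(1−|w|)/|w| ≤ dist(z, [−2, 2]) ≤ ((1+√2)/2)·|w²−1|·(1−|w|)/|w|. -/
open Complex Metric Set

-- Case A core inequality
lemma dist_est_caseA (r A : ℝ) (hr0 : 0 < r) (hr1 : r < 1) (hAr : A ≤ r^2)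
    (hcond : A*(1+r^2)^2 ≤ 4*r^4) :
    ((1+r^2)^2-4*A)*(1-r)^2*r^2/4 ≤ (r^2-A)*(1-r^2)^2 := by
  have hr2 : r^2 ≤ 1 := by nlinarith
  have hr4 : r^4 ≤ 1 := by nlinarith
  have h1 : r^2*(1-r^2)^2 ≤ (r^2-A)*(1+r^2)^2 := by nlinarith
  have h2 : (r^2-A)*(1+r^2)^2 ≤ 4*(1+2*r)*(r^2-A) := by
    nlinarith [mul_nonneg (sub_nonneg.2 hAr) (show (0:ℝ) ≤ 3+8*r-2*r^2-r^4 by nlinarith)]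
  nlinarith [sq_nonneg (1-r), sq_nonneg r]

-- Case B core inequality
lemma dist_est_caseB (r D : ℝ) (hr0 : 0 < r) (hr1 : r < 1) (hDr : D ≤ r) :
    ((1+r^2)^2-4*D^2)*(1-r)^2*r^2/4 ≤ (D*(1+r^2)-2*r^2)^2 + (r^2-D^2)*(1-r^2)^2 := by
  have hG : r^2*(1-r)^4 ≤ (1-r)^2*(1+2*r)*(r^2-D^2) + (D*(1+r^2)-2*r^2)^2 := by
    have hh : (0:ℝ) ≤ 4*r^2*(1+r^2) - r^2*(5-2*r+r^2)*(D+r) := by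
      nlinarith [mul_nonneg (mul_nonneg (sq_nonneg r) (sub_nonneg.2 hDr))
          (show (0:ℝ) ≤ 5-2*r+r^2 by nlinarith),
        mul_nonneg (mul_nonneg (sq_nonneg (1-r)) (sq_nonneg r))
          (show (0:ℝ) ≤ 2-r by linarith)]
    nlinarith [mul_nonneg (sub_nonneg.2 hDr) hh]
  have h4 : (1-r)^4*(1+r)^2*r^2/4 ≤ r^2*(1-r)^4 := by
    nlinarith [mul_nonneg (mul_nonneg (sq_nonneg (1-r)) (sq_nonneg (r*(1-r))))
      (show (0:ℝ) ≤ 3+r by linarith)]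
  nlinarith [hG, h4]

-- lower bound key, in coordinates
lemma dist_est_lowerKey (r a b m x : ℝ) (hr0 : 0 < r) (hr1 : r < 1) (hab : a^2+b^2 = r^2)
    (hm2 : m^2 = (1+r^2)^2 - 4*a^2) (hx1 : -2 ≤ x) (hx2 : x ≤ 2) :
    m^2*(1-r)^2*r^2/4 ≤ (a*(1+r^2)-x*r^2)^2 + (b*(1-r^2))^2 := by
  have hb2 : b^2 = r^2 - a^2 := by linarith
  have har : a^2 ≤ r^2 := by nlinarith [sq_nonneg b]
  have hDr : |a| ≤ r := by
    have h1 : |a|^2 ≤ r^2 := by rw [_root_.sq_abs]; exact har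
    nlinarith [abs_nonneg a]
  rcases le_or_gt (|a| * (1+r^2)) (2*r^2) with hc | hc
  · have hA : a^2*(1+r^2)^2 ≤ 4*r^4 := by
      have := mul_self_le_mul_self (by positivity) hc
      nlinarith [_root_.sq_abs a]
    have hca := dist_est_caseA r (a^2) hr0 hr1 har hA
    have he : (b*(1-r^2))^2 = (r^2-a^2)*(1-r^2)^2 := by
      linear_combination (1-r^2)^2 * hb2
    have hmeq : m^2*(1-r)^2*r^2 = ((1+r^2)^2-4*a^2)*(1-r)^2*r^2 := by
      linear_combination (1-r)^2*r^2 * hm2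
    nlinarith [sq_nonneg (a*(1+r^2)-x*r^2), hca, he, hmeq]
  · have h1 : |a| * (1+r^2) - 2*r^2 ≤ |a*(1+r^2)-x*r^2| := by
      have hxr : |x*r^2| ≤ 2*r^2 := by
        rw [abs_mul, _root_.abs_of_nonneg (sq_nonneg r)]
        have : |x| ≤ 2 := abs_le.2 ⟨hx1, hx2⟩
        nlinarith [sq_nonneg r]
      have : |a| * (1+r^2) = |a*(1+r^2)| := by
        rw [abs_mul, _root_.abs_of_pos (by positivity : (0:ℝ) < 1+r^2)]
      linarith [abs_sub_abs_le_abs_sub (a*(1+r^2)) (x*r^2)]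
    have h2 : (|a| * (1+r^2)-2*r^2)^2 ≤ (a*(1+r^2)-x*r^2)^2 := by
      have h0 : 0 ≤ |a| * (1+r^2)-2*r^2 := by linarith
      calc (|a| * (1+r^2)-2*r^2)^2 ≤ |a*(1+r^2)-x*r^2|^2 := by
            exact pow_le_pow_left₀ h0 h1 2
        _ = (a*(1+r^2)-x*r^2)^2 := _root_.sq_abs _
    have hcb := dist_est_caseB r (|a|) hr0 hr1 hDr
    have hmeq : m^2*(1-r)^2*r^2 = ((1+r^2)^2-4*|a|^2)*(1-r)^2*r^2 := by
      rw [_root_.sq_abs]; linear_combination (1-r)^2*r^2 * hm2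
    have he2 : (b*(1-r^2))^2 = (r^2-|a|^2)*(1-r^2)^2 := by
      rw [_root_.sq_abs]; linear_combination (1-r^2)^2 * hb2
    linarith [hcb, h2, hmeq, he2]

-- upper bound key
lemma dist_est_upperKey (r a : ℝ) (hr0 : 0 < r) (hr1 : r < 1) (ha : a^2 ≤ r^2) :
    r^2*(1+r)^2 - 4*r*a^2 ≤ ((1+Real.sqrt 2)/2)^2 * (((1+r^2)^2 - 4*a^2) * r^2) := by
  have hq : Real.sqrt 2 ^ 2 = 2 := Real.sq_sqrt (by norm_num)
  have hq1 : 1 ≤ Real.sqrt 2 := by nlinarith [Real.sqrt_nonneg 2]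
  set q := Real.sqrt 2
  have key : 0 ≤ (1+q)*(1+r^2) - 2*(1+r) := by nlinarith [sq_nonneg (r-(q-1))]
  have h0 : 0 ≤ (3+2*q)*(1+r^2)^2 - 4*(1+r)^2 := by
    nlinarith [mul_nonneg key (show (0:ℝ) ≤ (1+q)*(1+r^2)+2*(1+r) by nlinarith)]
  have hs : 0 ≤ (3+2*q)*(1-r^2)^2 - 4*(1-r)^2 := by
    nlinarith [mul_nonneg (sq_nonneg (1-r)) (show (0:ℝ) ≤ (3+2*q)*(1+r)^2 - 4 by nlinarith [sq_nonneg r])]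
  have hK : ((1+q)/2)^2 = (3+2*q)/4 := by linear_combination hq/4
  rw [hK]
  nlinarith [mul_nonneg (sub_nonneg.2 ha) h0, mul_nonneg (sq_nonneg a) hs]

/-- For `w ∈ 𝔻 \ {0}` and `z = w + w⁻¹`, the distance from `z` to `[-2,2]` is
comparable to `|w²-1|(1-|w|)/|w|`. -/
theorem dist_to_interval_est (w : ℂ) (hw : w ∈ ball (0 : ℂ) 1) (hw0 : w ≠ 0) :
    (1 / 2) * (‖w ^ 2 - 1‖ * (1 - ‖w‖) / ‖w‖) ≤
      Metric.infDist (w + w⁻¹) ((fun x : ℝ => (x : ℂ)) '' Set.Icc (-2 : ℝ) 2) ∧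
    Metric.infDist (w + w⁻¹) ((fun x : ℝ => (x : ℂ)) '' Set.Icc (-2 : ℝ) 2) ≤
      ((1 + Real.sqrt 2) / 2) *
        (‖w ^ 2 - 1‖ * (1 - ‖w‖) / ‖w‖) := by
  have hr1 : ‖w‖ < 1 := by simpa using mem_ball_zero_iff.mp hw
  have hr0 : 0 < ‖w‖ := norm_pos_iff.mpr hw0
  have hn : Complex.normSq w = ‖w‖ ^ 2 := (Complex.sq_norm w).symm
  have hab : w.re^2 + w.im^2 = ‖w‖ ^ 2 := by
    rw [← hn, Complex.normSq_apply]; ring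
  have hm2 : ‖w^2-1‖ ^ 2 = (1 + ‖w‖ ^ 2)^2 - 4*w.re^2 := by
    have h := Complex.sq_norm (w^2-1)
    have h2 : Complex.normSq (w^2-1) = (w.re^2-w.im^2-1)^2 + (2*w.re*w.im)^2 := by
      simp [Complex.normSq_apply, Complex.mul_re, Complex.mul_im, pow_two]
      ring
    rw [h2] at h
    linear_combination h + (w.re^2+w.im^2+‖w‖^2+2)*hab
  have hm0 : 0 ≤ ‖w^2-1‖ := norm_nonneg _
  have h1r : (0:ℝ) ≤ 1 - ‖w‖ := by linarith
  have hSne : ((fun x : ℝ => (x : ℂ)) '' Set.Icc (-2 : ℝ) 2).Nonempty :=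
    ⟨((0:ℝ):ℂ), ⟨0, by norm_num, rfl⟩⟩
  have hζ : ∀ x : ℝ, Complex.normSq (w + w⁻¹ - (x:ℂ)) =
      (w.re + w.re/‖w‖^2 - x)^2 + (w.im - w.im/‖w‖^2)^2 := by
    intro x
    simp [Complex.normSq_apply, Complex.add_re, Complex.sub_re, Complex.add_im,
      Complex.sub_im, Complex.inv_re, Complex.inv_im, hn]
    ring
  set r := ‖w‖
  set m := ‖w^2-1‖
  set a := w.re
  set b := w.im
  constructor
  · by_contra hcon
    push_neg at hcon
    rw [Metric.infDist_lt_iff hSne] at hcon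
    obtain ⟨y, ⟨x, ⟨hx1, hx2⟩, rfl⟩, hdlt⟩ := hcon
    rw [Complex.dist_eq] at hdlt
    refine absurd hdlt (not_lt.2 ?_)
    have hL0 : 0 ≤ 1/2 * (m * (1-r)/r) := by
      apply mul_nonneg (by norm_num)
      exact div_nonneg (mul_nonneg hm0 h1r) hr0.le
    have hkey := dist_est_lowerKey r a b m x hr0 hr1 hab hm2 hx1 hx2
    have hsq : (1/2 * (m*(1-r)/r))^2 ≤ Complex.normSq (w + w⁻¹ - (x:ℂ)) := by
      rw [hζ x]
      have e1 : (a + a/r^2 - x)^2 + (b - b/r^2)^2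
          = ((a*(1+r^2)-x*r^2)^2 + (b*(1-r^2))^2)/r^4 := by
        field_simp; ring
      have e2 : (1/2 * (m*(1-r)/r))^2 = (m^2*(1-r)^2*r^2/4)/r^4 := by
        field_simp; ring
      rw [e1, e2]
      gcongr
    calc 1/2 * (m*(1-r)/r) = Real.sqrt ((1/2 * (m*(1-r)/r))^2) := (Real.sqrt_sq hL0).symm
      _ ≤ Real.sqrt (Complex.normSq (w + w⁻¹ - (x:ℂ))) := Real.sqrt_le_sqrt hsq
      _ = ‖w + w⁻¹ - (x:ℂ)‖ := by rw [← Complex.sq_norm, Real.sqrt_sq (norm_nonneg _)]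
  · have hare : |a| ≤ r := Complex.abs_re_le_norm w
    have ha2 : a^2 ≤ r^2 := by nlinarith [abs_nonneg a, _root_.sq_abs a]
    have hb2 : b^2 = r^2 - a^2 := by linarith
    set x₀ : ℝ := 2*a/r with hx₀
    have hx₀mem : ((x₀:ℝ):ℂ) ∈ ((fun x : ℝ => (x : ℂ)) '' Set.Icc (-2 : ℝ) 2) := by
      refine ⟨x₀, ⟨?_, ?_⟩, rfl⟩
      · rw [hx₀, neg_le, ← neg_div, div_le_iff₀ hr0]
        nlinarith [neg_abs_le a]
      · rw [hx₀, div_le_iff₀ hr0]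
        nlinarith [le_abs_self a]
    have hK0 : 0 ≤ (1 + Real.sqrt 2)/2 := by positivity
    have hR0 : 0 ≤ (1 + Real.sqrt 2)/2 * (m*(1-r)/r) :=
      mul_nonneg hK0 (div_nonneg (mul_nonneg hm0 h1r) hr0.le)
    have hup := dist_est_upperKey r a hr0 hr1 ha2
    have hsq : Complex.normSq (w + w⁻¹ - ((x₀:ℝ):ℂ)) ≤ ((1 + Real.sqrt 2)/2 * (m*(1-r)/r))^2 := by
      rw [hζ x₀]
      have e1 : (a + a/r^2 - x₀)^2 + (b - b/r^2)^2
          = ((1-r)^2 * (a^2*(1-r)^2 + b^2*(1+r)^2))/r^4 := by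
        rw [hx₀]; field_simp; ring
      have e2 : ((1 + Real.sqrt 2)/2 * (m*(1-r)/r))^2
          = ((1-r)^2 * (((1 + Real.sqrt 2)/2)^2 * (m^2*r^2)))/r^4 := by
        field_simp
      have hAA : a^2*(1-r)^2 + b^2*(1+r)^2 = r^2*(1+r)^2 - 4*r*a^2 := by
        linear_combination (1+r)^2 * hb2
      have hBB : ((1 + Real.sqrt 2)/2)^2 * (m^2*r^2)
          = ((1 + Real.sqrt 2)/2)^2 * (((1+r^2)^2-4*a^2)*r^2) := by
        linear_combination ((1 + Real.sqrt 2)/2)^2*r^2*hm2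
      rw [e1, e2]
      gcongr ((1-r)^2 * ?_)/r^4
      linarith [hup, hAA, hBB]
    calc Metric.infDist (w + w⁻¹) ((fun x : ℝ => (x : ℂ)) '' Set.Icc (-2 : ℝ) 2)
        ≤ dist (w + w⁻¹) ((x₀:ℝ):ℂ) := Metric.infDist_le_dist_of_mem hx₀mem
      _ = ‖w + w⁻¹ - ((x₀:ℝ):ℂ)‖ := Complex.dist_eq _ _
      _ = Real.sqrt (Complex.normSq (w + w⁻¹ - ((x₀:ℝ):ℂ))) := by rw [← Complex.sq_norm, Real.sqrt_sq (norm_nonneg _)]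
      _ ≤ Real.sqrt (((1 + Real.sqrt 2)/2 * (m*(1-r)/r))^2) := Real.sqrt_le_sqrt hsq
      _ = (1 + Real.sqrt 2)/2 * (m*(1-r)/r) := Real.sqrt_sq hR0
end

section
/- Let a, b ∈ ℝ with a < b, let φ(w) := ((b−a)/4)·(w + w⁻¹ + 2) + a, and let w ∈ 𝔻 \ {0}. Then ((b−a)/8)·|w²−1|·(1−|w|)/|w| ≤ dist(φ(w), [a, b]) ≤ ((b−a)(1+√2)/8)·|w²−1|·(1−|w|)/|w|. -/
open Complex Metric Set

lemma core_lower (w : ℂ) (hr : ‖w‖ ≤ 1) (t : ℝ) (ht : t ∈ Set.Icc (-1:ℝ) 1) :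
    (1 - ‖w‖) * ‖w^2 - 1‖ / 2 ≤ ‖w^2 - 2*t*w + 1‖ := by
  obtain ⟨ht1, ht2⟩ := ht
  set u : ℂ := ⟨t, Real.sqrt (1 - t^2)⟩ with hu
  have ht2' : (0:ℝ) ≤ 1 - t^2 := by nlinarith
  have huu : u * (starRingEnd ℂ) u = 1 := by
    have : Real.sqrt (1 - t^2) * Real.sqrt (1 - t^2) = 1 - t^2 :=
      Real.mul_self_sqrt ht2'
    apply Complex.ext <;> simp [hu, Complex.mul_re, Complex.mul_im] <;> nlinarith
  have habsu : ‖u‖ = 1 := by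
    have h := huu
    rw [Complex.mul_conj] at h
    have h2 : Complex.normSq u = 1 := by exact_mod_cast congrArg Complex.re h
    rw [Complex.norm_def, h2, Real.sqrt_one]
  have hsum : u + (starRingEnd ℂ) u = 2 * t := by
    apply Complex.ext <;> simp [hu] <;> ring
  set A := ‖w - u‖ with hA
  set B := ‖w - (starRingEnd ℂ) u‖ with hB
  have habsu' : ‖(starRingEnd ℂ) u‖ = 1 := by rw [Complex.norm_conj, habsu]
  have hA0 : 0 ≤ A := norm_nonneg _
  have hB0 : 0 ≤ B := norm_nonneg _
  have hA1 : 1 - ‖w‖ ≤ A := by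
    calc 1 - ‖w‖ = ‖u‖ - ‖w‖ := by rw [habsu]
    _ ≤ ‖u - w‖ := norm_sub_norm_le u w
    _ = A := by rw [hA, norm_sub_rev]
  have hB1 : 1 - ‖w‖ ≤ B := by
    calc 1 - ‖w‖ = ‖(starRingEnd ℂ) u‖ - ‖w‖ := by
          rw [habsu']
    _ ≤ ‖(starRingEnd ℂ) u - w‖ := norm_sub_norm_le _ w
    _ = B := by rw [hB, norm_sub_rev]
  have hup : ‖w + (starRingEnd ℂ) u‖ ≤ 2 := by
    calc ‖w + (starRingEnd ℂ) u‖ ≤ ‖w‖ + ‖(starRingEnd ℂ) u‖ :=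
          norm_add_le _ _
    _ ≤ 2 := by rw [habsu']; linarith
  have hup2 : ‖w + u‖ ≤ 2 := by
    calc ‖w + u‖ ≤ ‖w‖ + ‖u‖ := norm_add_le _ _
    _ ≤ 2 := by rw [habsu]; linarith
  have h2 : 2*(w^2 - 1) = (w - u)*(w + (starRingEnd ℂ) u) + (w - (starRingEnd ℂ) u)*(w + u) := by
    linear_combination (2:ℂ) * huu
  have habs2 : ‖w^2 - 1‖ ≤ A + B := by
    have : 2 * ‖w^2 - 1‖ = ‖2*(w^2-1)‖ := by
      rw [norm_mul]; simp
    rw [h2, ] at this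
    have tri := norm_add_le ((w - u)*(w + (starRingEnd ℂ) u)) ((w - (starRingEnd ℂ) u)*(w + u))
    rw [norm_mul, norm_mul] at tri
    nlinarith
  have hfact : w^2 - 2*(t:ℂ)*w + 1 = (w - u) * (w - (starRingEnd ℂ) u) := by
    linear_combination w * hsum - huu
  have habsf : ‖w^2 - 2*(t:ℂ)*w + 1‖ = A * B := by rw [hfact, norm_mul]
  rw [habsf]
  nlinarith [mul_nonneg (sub_nonneg.2 hA1) hB0, mul_nonneg (sub_nonneg.2 hB1) hA0,
    mul_le_mul_of_nonneg_left habs2 (by linarith : (0:ℝ) ≤ 1 - ‖w‖)]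

set_option maxHeartbeats 1000000 in
lemma core_upper (w : ℂ) (hw0 : w ≠ 0) (hr1 : ‖w‖ < 1) :
    ‖w^2 - 2*((w.re / ‖w‖):ℝ)*w + 1‖ ≤
      (1 + Real.sqrt 2)/2 * ((1 - ‖w‖) * ‖w^2 - 1‖) := by
  set r := ‖w‖ with hrdef
  have hr0 : 0 < r := norm_pos_iff.mpr hw0
  have hrne : (r:ℂ) ≠ 0 := by exact_mod_cast hr0.ne'
  have hwc : w * (starRingEnd ℂ) w = (r:ℂ)^2 := by
    rw [Complex.mul_conj]
    norm_cast
    rw [hrdef, Complex.sq_norm]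
  have hx : w + (starRingEnd ℂ) w = 2 * (w.re : ℂ) := by
    apply Complex.ext <;> simp <;> ring
  set Q : ℂ := w^2*(r:ℂ) - 2*(w.re:ℂ)*w + (r:ℂ) with hQdef
  have hQ : (w^2 - 2*((w.re / r : ℝ):ℂ)*w + 1) * (r:ℂ) = Q := by
    rw [hQdef]; push_cast; field_simp
  have hfact : Q * (r:ℂ) = ((r:ℂ) - 1) * w * (w * r - (starRingEnd ℂ) w) := by
    rw [hQdef]
    linear_combination ((r:ℂ) * w) * hx - hwc
  have habsQ : ‖w^2 - 2*((w.re / r : ℝ):ℂ)*w + 1‖ * r = ‖Q‖ := by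
    have := congrArg (‖·‖) hQ
    rwa [norm_mul, Complex.norm_real, Real.norm_eq_abs, abs_of_pos hr0] at this
  have habs : ‖Q‖ * r = (1 - r) * r * ‖w * r - (starRingEnd ℂ) w‖ := by
    have h := congrArg (‖·‖) hfact
    rw [norm_mul, norm_mul, norm_mul, Complex.norm_real, Real.norm_eq_abs, abs_of_pos hr0] at h
    have e1 : ‖(r:ℂ) - 1‖ = 1 - r := by
      have e : ((r:ℂ) - 1) = ((r - 1 : ℝ) : ℂ) := by push_cast; ring
      rw [e, Complex.norm_real, Real.norm_eq_abs, abs_of_nonpos (by linarith : r - 1 ≤ 0)]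
      ring
    rw [e1, ← hrdef] at h
    rw [h]
  have hs : Real.sqrt 2 ^ 2 = 2 := Real.sq_sqrt (by norm_num)
  have hs1 : 1 ≤ Real.sqrt 2 := by nlinarith [Real.sqrt_nonneg 2]
  set s := Real.sqrt 2 with hsdef
  set m := (w^2).re with hmdef
  have hr2 : w.re^2 + w.im^2 = r^2 := by
    rw [hrdef, Complex.sq_norm, Complex.normSq_apply]; ring
  have hm2 : m = w.re^2 - w.im^2 := by
    rw [hmdef, pow_two, Complex.mul_re]; ring
  have hmabs : |m| ≤ r^2 := by
    have := Complex.abs_re_le_norm (w^2)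
    rwa [norm_pow, ← hrdef, ← hmdef] at this
  set K := ‖w * r - (starRingEnd ℂ) w‖ with hKdef
  have hK0 : 0 ≤ K := norm_nonneg _
  set C := ‖w^2 - 1‖ with hCdef
  have hC0 : 0 ≤ C := norm_nonneg _
  have hsq1 : K ^ 2 = r^4 + r^2 - 2*r*m := by
    rw [hKdef, Complex.sq_norm, Complex.normSq_apply]
    have e1 : (w * (r:ℂ) - (starRingEnd ℂ) w).re = (r - 1) * w.re := by
      simp [Complex.mul_re]
      ring
    have e2 : (w * (r:ℂ) - (starRingEnd ℂ) w).im = (r + 1) * w.im := by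
      simp [Complex.mul_im]
      ring
    rw [e1, e2]
    linear_combination (r^2+1) * hr2 + 2*r*hm2
  have hsq2 : C ^ 2 = r^4 - 2*m + 1 := by
    rw [hCdef, Complex.sq_norm, Complex.normSq_apply]
    have e3 : (w^2 - 1).re = m - 1 := by simp [hmdef]
    have e4 : (w^2 - 1).im = 2 * w.re * w.im := by
      simp [pow_two, Complex.mul_im]; ring
    rw [e3, e4]
    linear_combination (m + w.re^2 - w.im^2) * hm2 + (w.re^2 + w.im^2 + r^2) * hr2
  -- the key polynomial inequality
  have hm1 : m ≤ r^2 := (abs_le.mp hmabs).2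
  have hm1' : -(r^2) ≤ m := (abs_le.mp hmabs).1
  have hid : 8 * ((3+2*s)/4 * (r^2*(r^4-2*m+1)) - (r^4+r^2-2*r*m))
      = (m+r^2)*((1-r)^2*((3+2*s)*(1+r)^2-4))
        + (r^2-m)*((1+s)*((r-(s-1))^2)*((1+s)*(1+r^2)+2*(1+r)))
        := by
    linear_combination (-r^2*s^2 - r^4*s^2 + m*s^2 + r^2*m*s^2 - 2*r^2*s + 2*r^5*s + 2*m*s
      - 2*r^3*m*s + 8*r^3 + 2*r^5 + 2*r^2 + 3*r^4 - r^6 - 8*r*m - 2*r^3*m - 2*m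
      - 3*r^2*m + r^4*m) * hs
  have ht1 : 0 ≤ (m+r^2)*((1-r)^2*((3+2*s)*(1+r)^2-4)) := by
    apply mul_nonneg (by linarith)
    apply mul_nonneg (sq_nonneg _)
    nlinarith [sq_nonneg r]
  have ht2 : 0 ≤ (r^2-m)*((1+s)*((r-(s-1))^2)*((1+s)*(1+r^2)+2*(1+r))) := by
    apply mul_nonneg (by linarith)
    apply mul_nonneg (mul_nonneg (by linarith) (sq_nonneg _))
    nlinarith [sq_nonneg r]
  have hpoly : r^4 + r^2 - 2*r*m ≤ (3+2*s)/4 * (r^2*(r^4-2*m+1)) := by linarith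
  have hkey : K ≤ (1+s)/2 * (r * C) := by
    have h2 : 0 ≤ (1+s)/2 * (r * C) := by positivity
    have hsqle : K^2 ≤ ((1+s)/2 * (r * C))^2 := by
      have expand : ((1+s)/2 * (r * C))^2 = (3+2*s)/4 * (r^2*(r^4-2*m+1)) := by
        rw [mul_pow, mul_pow, hsq2]
        nlinarith [hs]
      rw [expand, hsq1]; exact hpoly
    have h3 := Real.sqrt_le_sqrt hsqle
    rwa [Real.sqrt_sq hK0, Real.sqrt_sq h2] at h3
  -- combine
  have hfin : ‖w^2 - 2*((w.re / r : ℝ):ℂ)*w + 1‖ * r^2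
      ≤ ((1+s)/2 * ((1-r) * C)) * r^2 := by
    have e : ‖w^2 - 2*((w.re / r : ℝ):ℂ)*w + 1‖ * r^2 = (1 - r) * r * K := by
      calc ‖w^2 - 2*((w.re / r : ℝ):ℂ)*w + 1‖ * r^2
          = (‖w^2 - 2*((w.re / r : ℝ):ℂ)*w + 1‖ * r) * r := by ring
        _ = ‖Q‖ * r := by rw [habsQ]
        _ = (1 - r) * r * K := habs
    rw [e]
    have h1r : 0 ≤ (1 - r) * r := by nlinarith
    calc (1 - r) * r * K ≤ (1 - r) * r * ((1+s)/2 * (r * C)) := by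
          exact mul_le_mul_of_nonneg_left hkey h1r
      _ = ((1+s)/2 * ((1-r) * C)) * r^2 := by ring
  have hrr : (0:ℝ) < r^2 := by positivity
  exact le_of_mul_le_mul_right hfin hrr

/-- For `w ∈ 𝔻 \ {0}` and `φ(w) = ((b-a)/4)(w + w⁻¹ + 2) + a`, the distance from
`φ(w)` to `[a,b]` is comparable to `((b-a)/8)·|w²-1|(1-|w|)/|w|`. -/
theorem dist_to_interval_est_general (a b : ℝ) (hab : a < b)
    (w : ℂ) (hw : w ∈ ball (0 : ℂ) 1) (hw0 : w ≠ 0) :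
    ((b - a) / 8) * (‖w ^ 2 - 1‖ * (1 - ‖w‖) / ‖w‖) ≤
      Metric.infDist (((b : ℂ) - a) / 4 * (w + w⁻¹ + 2) + a)
        ((fun x : ℝ => (x : ℂ)) '' Set.Icc a b) ∧
    Metric.infDist (((b : ℂ) - a) / 4 * (w + w⁻¹ + 2) + a)
        ((fun x : ℝ => (x : ℂ)) '' Set.Icc a b) ≤
      ((b - a) * (1 + Real.sqrt 2) / 8) *
        (‖w ^ 2 - 1‖ * (1 - ‖w‖) / ‖w‖) := by
  have hr1 : ‖w‖ < 1 := by
    rw [mem_ball_zero_iff] at hw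
    exact hw
  set r := ‖w‖ with hrdef
  have hr0 : 0 < r := norm_pos_iff.mpr hw0
  set c : ℝ := (b - a)/4 with hc
  have hc0 : 0 < c := by rw [hc]; linarith
  set P : ℂ := ((b : ℂ) - a) / 4 * (w + w⁻¹ + 2) + a with hP
  set C := ‖w^2 - 1‖ with hC
  have hC0 : 0 ≤ C := norm_nonneg _
  have hdist : ∀ t : ℝ, dist P ((a + c*(2+2*t) : ℝ):ℂ)
      = c * ‖w^2 - 2*(t:ℝ)*w + 1‖ / r := by
    intro t
    have hid : P - ((a + c*(2+2*t):ℝ):ℂ) = (c:ℂ) * (w^2 - 2*(t:ℝ)*w + 1) / w := by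
      rw [hP, hc]
      push_cast
      field_simp
      ring
    rw [Complex.dist_eq, hid, norm_div, norm_mul, Complex.norm_real, Real.norm_eq_abs, abs_of_pos hc0, ← hrdef]
  constructor
  · refine le_of_not_gt fun hlt => ?_
    obtain ⟨z, hz, hdz⟩ := (Metric.infDist_lt_iff (⟨(a:ℂ), ⟨a, ⟨le_refl a, hab.le⟩, rfl⟩⟩ : Set.Nonempty ((fun x : ℝ => (x:ℂ)) '' Set.Icc a b))).mp hlt
    refine absurd hdz (not_lt.2 ?_)
    obtain ⟨x, hx, rfl⟩ := hz
    set t : ℝ := (x - a)/(2*c) - 1 with htd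
    have hxx : x = a + c*(2+2*t) := by
      rw [htd]; field_simp; ring
    have ht : t ∈ Set.Icc (-1:ℝ) 1 := by
      constructor
      · rw [htd]
        have h1 : 0 ≤ (x-a)/(2*c) := by
          apply div_nonneg (by linarith [hx.1]) (by linarith)
        linarith
      · rw [htd]
        have h1 : (x-a)/(2*c) ≤ 2 := by
          rw [div_le_iff₀ (by linarith)]
          have := hx.2
          rw [hc] at *
          linarith
        linarith
    have heq : ((x:ℝ):ℂ) = ((a + c*(2+2*t):ℝ):ℂ) := by rw [← hxx]
    rw [show (fun x : ℝ => (x:ℂ)) x = ((a + c*(2+2*t):ℝ):ℂ) from by rw [← hxx]]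
    rw [hdist t]
    have hcore := core_lower w hr1.le t ht
    rw [← hrdef, ← hC] at hcore
    calc (b - a) / 8 * (C * (1 - r) / r) = c * ((1 - r) * C / 2) / r := by rw [hc]; ring
      _ ≤ c * ‖w^2 - 2*(t:ℝ)*w + 1‖ / r := by gcongr
  · set t0 : ℝ := w.re / r with ht0d
    have habsre : |w.re| ≤ r := by rw [hrdef]; exact Complex.abs_re_le_norm w
    have ht0 : t0 ∈ Set.Icc (-1:ℝ) 1 := by
      obtain ⟨h1, h2⟩ := abs_le.mp habsre
      constructor
      · rw [ht0d, le_div_iff₀ hr0]; linarith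
      · rw [ht0d, div_le_iff₀ hr0]; linarith
    have hx0 : a + c*(2+2*t0) ∈ Set.Icc a b := by
      obtain ⟨h1, h2⟩ := ht0
      constructor
      · nlinarith
      · rw [hc] at *; nlinarith
    have hmem : ((a + c*(2+2*t0):ℝ):ℂ) ∈ (fun x : ℝ => (x:ℂ)) '' Set.Icc a b :=
      ⟨_, hx0, rfl⟩
    refine le_trans (Metric.infDist_le_dist_of_mem hmem) ?_
    rw [hdist t0]
    have hcore := core_upper w hw0 hr1
    rw [← hrdef, ← hC, ← ht0d] at hcore
    calc c * ‖w^2 - 2*(t0:ℝ)*w + 1‖ / r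
        ≤ c * ((1 + Real.sqrt 2)/2 * ((1 - r) * C)) / r := by gcongr
      _ = (b - a) * (1 + Real.sqrt 2) / 8 * (C * (1 - r) / r) := by rw [hc]; ring
end

section
/- Let 1 ≤ p ≤ ∞, let w ∈ 𝔻 \ {0} and set z := w + w⁻¹. Define b_k := w^{|k|}/(w⁻¹ − w) for k ∈ ℤ. Then the operator B on ℓ^p(ℤ, ℂ) given by (Bf)(n) := ∑_{k∈ℤ} b_{n−k} f(k) is a well-defined bounded linear operator with ‖B‖ ≤ ∑_{k∈ℤ} |b_k| = (1/|w⁻¹ − w|)·(1+|w|)/(1−|w|), and B satisfies B(z·𝟙 − Δ_p) = (z·𝟙 − Δ_p)B = 𝟙; in particular z·𝟙 − Δ_p is invertible and B = (z·𝟙 − Δ_p)⁻¹. -/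
open ENNReal Metric

namespace DLres

variable (p : ℝ≥0∞) [Fact (1 ≤ p)]

noncomputable abbrev L := lp (fun _ : ℤ => ℂ) p

lemma hp0 : p ≠ 0 := by
  have := Fact.out (p := 1 ≤ p); intro h; simp [h] at this

lemma norm_comp_equiv (e : ℤ ≃ ℤ) (f : L p) (g : L p)
    (hg : ∀ n, g n = f (e n)) : ‖g‖ = ‖f‖ := by
  rcases eq_or_ne p ∞ with rfl | hp
  · rw [lp.norm_eq_ciSup, lp.norm_eq_ciSup]
    have : (fun i => ‖g i‖) = (fun i => ‖f i‖) ∘ e := by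
      funext i; simp [hg]
    rw [iSup, iSup, this, Set.range_comp, e.range_eq_univ, Set.image_univ]
  · have hpt : 0 < p.toReal := ENNReal.toReal_pos (hp0 p) hp
    rw [lp.norm_eq_tsum_rpow hpt, lp.norm_eq_tsum_rpow hpt]
    congr 1
    rw [← e.tsum_eq (fun i => ‖f i‖ ^ p.toReal)]
    exact tsum_congr fun i => by rw [hg]

lemma memlp_comp_equiv (e : ℤ ≃ ℤ) (f : L p) :
    Memℓp (fun n => f (e n)) p := by
  rcases eq_or_ne p ∞ with rfl | hp
  · apply memℓp_infty
    have hb := (lp.memℓp f).bddAbove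
    obtain ⟨C, hC⟩ := hb
    exact ⟨C, by rintro x ⟨i, rfl⟩; exact hC ⟨e i, rfl⟩⟩
  · have hpt : 0 < p.toReal := ENNReal.toReal_pos (hp0 p) hp
    apply memℓp_gen
    have := ((lp.memℓp f).summable hpt)
    exact (e.summable_iff (f := fun i => ‖f i‖ ^ p.toReal)).2 this

/-- shift operator: `(T m f) n = f (n - m)`. -/
noncomputable def T (m : ℤ) : L p →L[ℂ] L p :=
  LinearMap.mkContinuous
    { toFun := fun f => ⟨fun n => f ((Equiv.subRight m) n), memlp_comp_equiv p _ f⟩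
      map_add' := fun f g => by apply lp.ext; funext n; simp only [lp.coeFn_add, Pi.add_apply]
      map_smul' := fun c f => by apply lp.ext; funext n; simp only [lp.coeFn_smul, Pi.smul_apply, RingHom.id_apply] }
    1
    (fun f => by
      rw [one_mul]
      exact le_of_eq (norm_comp_equiv p (Equiv.subRight m) f _ (fun n => rfl)))

@[simp] lemma T_apply (m : ℤ) (f : L p) (n : ℤ) : T p m f n = f (n - m) := rfl

lemma T_norm_le (m : ℤ) : ‖T p m‖ ≤ 1 :=
  LinearMap.mkContinuous_norm_le _ zero_le_one _

lemma T_comp (a b : ℤ) : (T p a).comp (T p b) = T p (a + b) := by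
  ext f n
  simp only [ContinuousLinearMap.comp_apply, T_apply]
  rw [sub_sub]


section Kernel
variable {w : ℂ} (hw : ‖w‖ < 1) (hw0 : w ≠ 0)

noncomputable def cc (w : ℂ) (k : ℤ) : ℂ := w ^ k.natAbs / (w⁻¹ - w)

lemma d_ne (hw : ‖w‖ < 1) (hw0 : w ≠ 0) : w⁻¹ - w ≠ 0 := by
  intro h
  have h1 : w⁻¹ = w := sub_eq_zero.mp h
  have h2 : w * w = 1 := by nth_rewrite 1 [← h1]; exact inv_mul_cancel₀ hw0
  have h3 : ‖w‖ * ‖w‖ = 1 := by rw [← norm_mul, h2, norm_one]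
  nlinarith [norm_nonneg w]

include hw in
lemma hasSum_abs_cc :
    HasSum (fun k : ℤ => ‖cc w k‖)
      ((1 / ‖w⁻¹ - w‖) * ((1 + ‖w‖) / (1 - ‖w‖))) := by
  set r := ‖w‖ with hr
  have hr0 : 0 ≤ r := norm_nonneg w
  have h1 : HasSum (fun n : ℕ => r ^ n) (1 - r)⁻¹ := hasSum_geometric_of_lt_one hr0 hw
  have h2 : HasSum (fun n : ℕ => r ^ (n + 1)) (r * (1 - r)⁻¹) := by
    simpa [pow_succ, mul_comm] using h1.mul_left r
  have key : HasSum (fun k : ℤ => r ^ k.natAbs) ((1 - r)⁻¹ + r * (1 - r)⁻¹) := by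
    refine HasSum.of_nat_of_neg_add_one ?_ ?_
    · have hfun : (fun n : ℕ => r ^ ((n : ℤ)).natAbs) = fun n : ℕ => r ^ n :=
        funext fun n => by congr 1 <;> omega
      rw [hfun]; exact h1
    · have hfun : (fun n : ℕ => r ^ ((-((n : ℤ) + 1)).natAbs)) = fun n : ℕ => r ^ (n + 1) :=
        funext fun n => by congr 1 <;> omega
      rw [hfun]; exact h2
  have habs : ∀ k : ℤ, ‖cc w k‖ = r ^ k.natAbs * (‖w⁻¹ - w‖)⁻¹ := by
    intro k; simp [cc, map_div₀, map_pow, div_eq_mul_inv, hr]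
  rw [show (1 / ‖w⁻¹ - w‖) * ((1 + r) / (1 - r))
      = ((1 - r)⁻¹ + r * (1 - r)⁻¹) * (‖w⁻¹ - w‖)⁻¹ by
    field_simp]
  exact (funext habs : _) ▸ key.mul_right _

include hw hw0 in
lemma kernel_identity (k : ℤ) :
    (w + w⁻¹) * cc w k - cc w (k - 1) - cc w (k + 1) = if k = 0 then 1 else 0 := by
  have hd := d_ne hw hw0
  have hsq : (1 : ℂ) - w ^ 2 ≠ 0 := by
    intro h
    apply hd
    have : w⁻¹ - w = (1 - w ^ 2) / w := by field_simp
    rw [this, h, zero_div]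
  have hnum : ∀ m : ℕ, (w + w⁻¹) * w ^ (m + 1) - w ^ m - w ^ (m + 2) = 0 := by
    intro m
    have h1 : w⁻¹ * w ^ (m + 1) = w ^ m := by
      rw [pow_succ']
      rw [← mul_assoc, inv_mul_cancel₀ hw0, one_mul]
    rw [add_mul, h1]; ring
  obtain ⟨n, rfl | rfl⟩ := Int.eq_nat_or_neg k
  · match n with
    | 0 =>
      simp only [cc]
      norm_num
      rw [show (w⁻¹ - w)⁻¹ = 1 / (w⁻¹ - w) by rw [one_div], ← mul_div_assoc, mul_one,
        ← sub_div, ← sub_div, show w + w⁻¹ - w - w = w⁻¹ - w by ring, div_self hd]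
    | (m+1) =>
      have e1 : ((m+1 : ℕ) : ℤ).natAbs = m + 1 := by omega
      have e2 : (((m+1 : ℕ) : ℤ) - 1).natAbs = m := by omega
      have e3 : (((m+1 : ℕ) : ℤ) + 1).natAbs = m + 2 := by omega
      have h0 : ¬ ((m+1 : ℕ) : ℤ) = 0 := by omega
      simp only [cc, e1, e2, e3, h0, if_false]
      rw [← mul_div_assoc, ← sub_div, ← sub_div, hnum m, zero_div]
  · match n with
    | 0 =>
      simp only [cc]
      norm_num
      rw [show (w⁻¹ - w)⁻¹ = 1 / (w⁻¹ - w) by rw [one_div], ← mul_div_assoc, mul_one,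
        ← sub_div, ← sub_div, show w + w⁻¹ - w - w = w⁻¹ - w by ring, div_self hd]
    | (m+1) =>
      have e1 : (-((m+1 : ℕ) : ℤ)).natAbs = m + 1 := by omega
      have e2 : ((-((m+1 : ℕ) : ℤ)) - 1).natAbs = m + 2 := by omega
      have e3 : ((-((m+1 : ℕ) : ℤ)) + 1).natAbs = m := by omega
      have h0 : ¬ (-((m+1 : ℕ) : ℤ)) = 0 := by omega
      simp only [cc, e1, e2, e3, h0, if_false]
      rw [← mul_div_assoc, show (w + w⁻¹) * w ^ (m+1) / (w⁻¹ - w) - w ^ (m+2) / (w⁻¹ - w) - w ^ m / (w⁻¹ - w)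
          = ((w + w⁻¹) * w ^ (m+1) - w ^ m - w ^ (m+2)) / (w⁻¹ - w) by ring, hnum m, zero_div]
end Kernel

/-- coordinate evaluation as a continuous linear functional -/
noncomputable def ev (n : ℤ) : L p →L[ℂ] ℂ :=
  LinearMap.mkContinuous
    { toFun := fun f => f n
      map_add' := fun f g => by simp [lp.coeFn_add]
      map_smul' := fun c f => by simp [lp.coeFn_smul] }
    1 (fun f => by rw [one_mul]; exact lp.norm_apply_le_norm (hp0 p) f n)

@[simp] lemma ev_apply (n : ℤ) (f : L p) : ev p n f = f n := rfl

end DLres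

set_option maxHeartbeats 1000000 in
open DLres in
/-- The resolvent of the discrete Laplacian on `ℓ^p(ℤ,ℂ)` at `z = w + w⁻¹`,
`w ∈ 𝔻 \ {0}`: the convolution operator with kernel `b_k = w^{|k|}/(w⁻¹ - w)`
is a bounded two-sided inverse of `z·𝟙 - Δ_p`, with norm at most
`∑_k |b_k| = (1/|w⁻¹-w|)·(1+|w|)/(1-|w|)`. -/
theorem resolvent_discrete_laplacian (p : ℝ≥0∞) [Fact (1 ≤ p)]
    (Δ : lp (fun _ : ℤ => ℂ) p →L[ℂ] lp (fun _ : ℤ => ℂ) p)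
    (hΔ : ∀ (f : lp (fun _ : ℤ => ℂ) p) (n : ℤ), Δ f n = f (n - 1) + f (n + 1))
    (w : ℂ) (hw : w ∈ ball (0 : ℂ) 1) (hw0 : w ≠ 0) :
    (∑' k : ℤ, ‖w ^ k.natAbs / (w⁻¹ - w)‖) =
        (1 / ‖w⁻¹ - w‖) * ((1 + ‖w‖) / (1 - ‖w‖)) ∧
    ∃ B : lp (fun _ : ℤ => ℂ) p →L[ℂ] lp (fun _ : ℤ => ℂ) p,
      (∀ (f : lp (fun _ : ℤ => ℂ) p) (n : ℤ),
        B f n = ∑' k : ℤ, (w ^ (n - k).natAbs / (w⁻¹ - w)) * f k) ∧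
      ‖B‖ ≤ ∑' k : ℤ, ‖w ^ k.natAbs / (w⁻¹ - w)‖ ∧
      B.comp ((w + w⁻¹) • ContinuousLinearMap.id ℂ (lp (fun _ : ℤ => ℂ) p) - Δ) =
        ContinuousLinearMap.id ℂ (lp (fun _ : ℤ => ℂ) p) ∧
      ((w + w⁻¹) • ContinuousLinearMap.id ℂ (lp (fun _ : ℤ => ℂ) p) - Δ).comp B =
        ContinuousLinearMap.id ℂ (lp (fun _ : ℤ => ℂ) p) := by
  have habs : ‖w‖ < 1 := by
    simpa using mem_ball_zero_iff.mp hw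
  set z := w + w⁻¹ with hz
  have hS := hasSum_abs_cc habs
  have hsummable : Summable fun k : ℤ => ‖cc w k‖ := hS.summable
  -- the family of shifted operators
  set u : ℤ → (L p →L[ℂ] L p) := fun k => cc w k • T p k with hu
  have hu_norm : ∀ k, ‖u k‖ ≤ ‖cc w k‖ := by
    intro k
    rw [hu]
    calc ‖cc w k • T p k‖ ≤ ‖cc w k‖ * ‖T p k‖ := ContinuousLinearMap.opNorm_smul_le _ _
    _ ≤ ‖cc w k‖ * 1 := by gcongr; exact T_norm_le p k
    _ = ‖cc w k‖ := by rw [mul_one]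
  have hu_summable : Summable u :=
    Summable.of_norm_bounded hsummable hu_norm
  set B : L p →L[ℂ] L p := ∑' k, u k with hBdef
  have hB : HasSum u B := hu_summable.hasSum
  -- pointwise formula (convolution form)
  have hBapply : ∀ (f : L p) (n : ℤ), B f n = ∑' k : ℤ, cc w k * f (n - k) := by
    intro f n
    have h1 : HasSum (fun k => u k f) (B f) :=
      hB.mapL (ContinuousLinearMap.apply ℂ (L p) f)
    have h2 : HasSum (fun k => ev p n (u k f)) (ev p n (B f)) := h1.mapL (ev p n)
    have h3 : ∀ k, ev p n (u k f) = cc w k * f (n - k) := by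
      intro k
      simp [hu, lp.coeFn_smul]
    rw [show (B f) n = ev p n (B f) from rfl, ← h2.tsum_eq]
    exact tsum_congr h3
  -- summability of convolutions
  have hsf : ∀ (f : L p) (m : ℤ), Summable fun k : ℤ => cc w k * f (m - k) := by
    intro f m
    apply Summable.of_norm_bounded (g := fun k => ‖cc w k‖ * ‖f‖)
      (hsummable.mul_right _)
    intro k
    rw [norm_mul]
    gcongr
    exact lp.norm_apply_le_norm (hp0 p) f _
  have hΔT : Δ = T p 1 + T p (-1) := by
    refine ContinuousLinearMap.ext fun f => lp.ext (funext fun n => ?_)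
    rw [hΔ]
    simp [ContinuousLinearMap.add_apply, lp.coeFn_add, sub_neg_eq_add]
  have hTcomm : ∀ k : ℤ,
      (z • ContinuousLinearMap.id ℂ (L p) - Δ).comp (T p k)
        = (T p k).comp (z • ContinuousLinearMap.id ℂ (L p) - Δ) := by
    intro k
    rw [hΔT]
    simp only [ContinuousLinearMap.sub_comp, ContinuousLinearMap.comp_sub,
      ContinuousLinearMap.add_comp, ContinuousLinearMap.comp_add,
      ContinuousLinearMap.smul_comp, ContinuousLinearMap.comp_smul,
      ContinuousLinearMap.id_comp, ContinuousLinearMap.comp_id, T_comp]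
    rw [add_comm k 1, add_comm k (-1)]
  have hDcomm : (z • ContinuousLinearMap.id ℂ (L p) - Δ).comp B
      = B.comp (z • ContinuousLinearMap.id ℂ (L p) - Δ) := by
    set Dd := z • ContinuousLinearMap.id ℂ (L p) - Δ with hDd
    have h1 : HasSum (fun k => Dd.comp (u k)) (Dd.comp B) := by
      have := hB.mapL (ContinuousLinearMap.compL ℂ (L p) (L p) (L p) Dd)
      simpa using this
    have h2 : HasSum (fun k => (u k).comp Dd) (B.comp Dd) := by
      have := hB.mapL ((ContinuousLinearMap.compL ℂ (L p) (L p) (L p)).flip Dd)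
      simpa using this
    have h3 : ∀ k, Dd.comp (u k) = (u k).comp Dd := by
      intro k
      rw [hu]
      simp only
      rw [ContinuousLinearMap.comp_smul, ContinuousLinearMap.smul_comp, hTcomm k]
    rw [funext h3] at h1
    exact h1.unique h2
  have key : (z • ContinuousLinearMap.id ℂ (L p) - Δ).comp B
      = ContinuousLinearMap.id ℂ (L p) := by
    refine ContinuousLinearMap.ext fun f => lp.ext (funext fun n => ?_)
    simp only [ContinuousLinearMap.comp_apply, ContinuousLinearMap.sub_apply,
      ContinuousLinearMap.smul_apply, ContinuousLinearMap.id_apply,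
      lp.coeFn_sub, Pi.sub_apply, lp.coeFn_smul, Pi.smul_apply, smul_eq_mul]
    rw [hΔ (B f) n]
    -- goal : z * B f n - (B f (n-1) + B f (n+1)) = f n
    have hs0 : HasSum (fun k : ℤ => cc w k * f (n - k)) (B f n) := by
      rw [hBapply]; exact (hsf f n).hasSum
    have hs1 : HasSum (fun k : ℤ => cc w (k - 1) * f (n - k)) (B f (n - 1)) := by
      rw [hBapply f (n - 1)]
      have base : HasSum (fun k : ℤ => cc w k * f (n - 1 - k))
          (∑' k : ℤ, cc w k * f (n - 1 - k)) := (hsf f (n - 1)).hasSum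
      have heq : (fun j : ℤ =>
            (fun k : ℤ => cc w (k - 1) * f (n - k)) ((Equiv.addRight (1 : ℤ)) j))
          = fun j : ℤ => cc w j * f (n - 1 - j) := funext fun j => by
        simp only [Equiv.coe_addRight]
        rw [add_sub_cancel_right, show n - (j + 1) = n - 1 - j by ring]
      exact ((Equiv.addRight (1 : ℤ)).hasSum_iff).mp (heq ▸ base)
    have hs2 : HasSum (fun k : ℤ => cc w (k + 1) * f (n - k)) (B f (n + 1)) := by
      rw [hBapply f (n + 1)]
      have base : HasSum (fun k : ℤ => cc w k * f (n + 1 - k))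
          (∑' k : ℤ, cc w k * f (n + 1 - k)) := (hsf f (n + 1)).hasSum
      have heq : (fun j : ℤ =>
            (fun k : ℤ => cc w (k + 1) * f (n - k)) ((Equiv.subRight (1 : ℤ)) j))
          = fun j : ℤ => cc w j * f (n + 1 - j) := funext fun j => by
        simp only [Equiv.subRight_apply]
        rw [show j - 1 + 1 = j by ring, show n - (j - 1) = n + 1 - j by ring]
      exact ((Equiv.subRight (1 : ℤ)).hasSum_iff).mp (heq ▸ base)
    have total := (hs0.mul_left z).sub (hs1.add hs2)
    rw [show (fun k : ℤ => z * (cc w k * f (n - k))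
          - (cc w (k - 1) * f (n - k) + cc w (k + 1) * f (n - k)))
        = fun k : ℤ => (z * cc w k - cc w (k - 1) - cc w (k + 1)) * f (n - k)
        from funext fun k => by ring] at total
    have final : HasSum
        (fun k : ℤ => (z * cc w k - cc w (k - 1) - cc w (k + 1)) * f (n - k)) (f n) := by
      have heq : (fun k : ℤ => (z * cc w k - cc w (k - 1) - cc w (k + 1)) * f (n - k))
          = fun k : ℤ => if k = (0 : ℤ) then f n else 0 := by
        funext k
        rw [hz, kernel_identity habs hw0 k]
        by_cases h : k = 0
        · simp [h]
        · simp [h]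
      rw [heq]
      exact hasSum_ite_eq 0 (f n)
    exact total.unique final
  refine ⟨hS.tsum_eq, B, ?_, ?_, ?_, ?_⟩
  · -- required pointwise formula
    intro f n
    rw [hBapply f n, ← (Equiv.subLeft n).tsum_eq (fun k => (w ^ (n - k).natAbs / (w⁻¹ - w)) * f k)]
    refine tsum_congr fun j => ?_
    simp only [Equiv.subLeft_apply]
    rw [show n - (n - j) = j by ring]
    rfl
  · -- norm bound
    calc ‖B‖ ≤ ∑' k, ‖u k‖ := norm_tsum_le_tsum_norm (hsummable.of_nonneg_of_le
        (fun k => norm_nonneg _) hu_norm)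
    _ ≤ ∑' k, ‖cc w k‖ := Summable.tsum_le_tsum hu_norm
        (hsummable.of_nonneg_of_le (fun k => norm_nonneg _) hu_norm) hsummable
  · -- B ∘ D = id
    rw [← hDcomm]; exact key
  · -- D ∘ B = id
    exact key
end

section
/- Let 1 ≤ p ≤ ∞, let w ∈ 𝔻 \ {0} and set z := w + w⁻¹. Then z·𝟙 − Δ_p is invertible on ℓ^p(ℤ, ℂ) and ‖(z·𝟙 − Δ_p)⁻¹‖ ≤ 2|w| / ( |w − 1|·|w + 1|·(1 − |w|) ). -/
open ENNReal Metric

noncomputable section ResolventAux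

variable (p : ℝ≥0∞) [Fact (1 ≤ p)]

private lemma memℓp_shift (m : ℤ) (f : lp (fun _ : ℤ => ℂ) p) :
    Memℓp (fun n : ℤ => f (n + m)) p := by
  rcases p.trichotomy with rfl | rfl | hp
  · exact absurd (Fact.out : (1:ℝ≥0∞) ≤ 0) (by simp)
  · apply memℓp_infty
    have : (Set.range fun n : ℤ => ‖f (n + m)‖) = Set.range fun n : ℤ => ‖f n‖ :=
      Function.Surjective.range_comp (Equiv.addRight m).surjective (fun n : ℤ => ‖f n‖)
    rw [this]
    exact memℓp_infty_iff.mp (lp.memℓp f)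
  · apply (memℓp_gen_iff hp).mpr
    have := (memℓp_gen_iff hp).mp (lp.memℓp f)
    exact ((Equiv.addRight m).summable_iff (f := fun n : ℤ => ‖f n‖ ^ p.toReal)).mpr this

private lemma norm_shift {m : ℤ} {f g : lp (fun _ : ℤ => ℂ) p}
    (h : ∀ n, g n = f (n + m)) : ‖g‖ = ‖f‖ := by
  rcases p.trichotomy with rfl | rfl | hp
  · exact absurd (Fact.out : (1:ℝ≥0∞) ≤ 0) (by simp)
  · rw [lp.norm_eq_ciSup, lp.norm_eq_ciSup]
    have : (Set.range fun n : ℤ => ‖g n‖) = Set.range fun n : ℤ => ‖f n‖ := by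
      have : (fun n : ℤ => ‖g n‖) = (fun n : ℤ => ‖f n‖) ∘ (Equiv.addRight m) := by
        funext n; simp [h n]
      rw [this, (Equiv.addRight m).surjective.range_comp]
    rw [iSup, iSup, this]
  · rw [lp.norm_eq_tsum_rpow hp, lp.norm_eq_tsum_rpow hp]
    congr 1
    have : ∀ n : ℤ, ‖g n‖ ^ p.toReal = ‖f ((Equiv.addRight m) n)‖ ^ p.toReal := by
      intro n; rw [h n]; rfl
    rw [tsum_congr this, (Equiv.addRight m).tsum_eq (fun n => ‖f n‖ ^ p.toReal)]

/-- The shift operator `(T m f) n = f (n + m)`. -/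
private def T (m : ℤ) : lp (fun _ : ℤ => ℂ) p →L[ℂ] lp (fun _ : ℤ => ℂ) p :=
  LinearMap.mkContinuous
    { toFun := fun f => ⟨fun n => f (n + m), memℓp_shift p m f⟩
      map_add' := fun f g => by
        apply lp.ext; funext n
        simp only [lp.coeFn_add, Pi.add_apply]
      map_smul' := fun c f => by
        apply lp.ext; funext n
        simp only [lp.coeFn_smul, Pi.smul_apply, RingHom.id_apply] }
    1
    (fun f => by
      rw [one_mul]
      exact le_of_eq (norm_shift p (fun n => rfl)))

private lemma T_apply (m : ℤ) (f : lp (fun _ : ℤ => ℂ) p) (n : ℤ) :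
    (T p m f) n = f (n + m) := rfl

private lemma T_norm_le (m : ℤ) : ‖T p m‖ ≤ 1 :=
  LinearMap.mkContinuous_norm_le _ zero_le_one _

private lemma T_zero : T p 0 = ContinuousLinearMap.id ℂ (lp (fun _ : ℤ => ℂ) p) := by
  ext f n
  simp [T_apply]

private lemma T_comp (m k : ℤ) : (T p m).comp (T p k) = T p (m + k) := by
  ext f n
  simp only [ContinuousLinearMap.comp_apply, T_apply]
  show f (n + m + k) = f (n + (m + k))
  rw [add_assoc]

set_option maxHeartbeats 4000000 in
set_option synthInstance.maxHeartbeats 1000000 in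
/-- For `w ∈ 𝔻 \ {0}` and `z = w + w⁻¹`, the operator `z·𝟙 - Δ_p` on
`ℓ^p(ℤ,ℂ)` is invertible with `‖(z·𝟙 - Δ_p)⁻¹‖ ≤ 2|w|/(|w-1||w+1|(1-|w|))`. -/
theorem resolvent_norm_bound (p : ℝ≥0∞) [Fact (1 ≤ p)]
    (Δ : lp (fun _ : ℤ => ℂ) p →L[ℂ] lp (fun _ : ℤ => ℂ) p)
    (hΔ : ∀ (f : lp (fun _ : ℤ => ℂ) p) (n : ℤ), Δ f n = f (n - 1) + f (n + 1))
    (w : ℂ) (hw : w ∈ ball (0 : ℂ) 1) (hw0 : w ≠ 0) :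
    ∃ B : lp (fun _ : ℤ => ℂ) p →L[ℂ] lp (fun _ : ℤ => ℂ) p,
      B.comp ((w + w⁻¹) • ContinuousLinearMap.id ℂ (lp (fun _ : ℤ => ℂ) p) - Δ) =
        ContinuousLinearMap.id ℂ (lp (fun _ : ℤ => ℂ) p) ∧
      ((w + w⁻¹) • ContinuousLinearMap.id ℂ (lp (fun _ : ℤ => ℂ) p) - Δ).comp B =
        ContinuousLinearMap.id ℂ (lp (fun _ : ℤ => ℂ) p) ∧
      ‖B‖ ≤ 2 * ‖w‖ /
        (‖w - 1‖ * ‖w + 1‖ * (1 - ‖w‖)) := by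
  classical
  set z : ℂ := w + w⁻¹ with hz
  set A : lp (fun _ : ℤ => ℂ) p →L[ℂ] lp (fun _ : ℤ => ℂ) p :=
    z • ContinuousLinearMap.id ℂ (lp (fun _ : ℤ => ℂ) p) - Δ with hA
  have hr : ‖w‖ < 1 := by simpa [Complex.dist_eq] using hw
  set r : ℝ := ‖w‖ with hrdef
  have hr0 : 0 ≤ r := norm_nonneg w
  have rpos : 0 < r := norm_pos_iff.mpr hw0
  have h1r : 0 < 1 - r := by linarith
  set c : ℤ → ℂ := fun m => w ^ m.natAbs with hc
  set g : ℤ → ℝ := fun m => r ^ m.natAbs with hgdef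
  have habs : ∀ m : ℤ, ‖c m‖ = g m := fun m => by
    simp [hc, hgdef, hrdef, map_pow]
  have hgeo := summable_geometric_of_lt_one hr0 hr
  have hgnat : (fun n : ℕ => g n) = fun n : ℕ => r ^ n := by
    funext n; simp [hgdef]
  have hgneg : (fun n : ℕ => g (-(n + 1))) = fun n : ℕ => r * r ^ n := by
    funext n
    simp only [hgdef]
    rw [show (-((n : ℤ) + 1)).natAbs = n + 1 from by omega]
    ring
  have hg : Summable g := by
    apply Summable.of_nat_of_neg_add_one
    · rw [hgnat]; exact hgeo
    · rw [hgneg]; exact hgeo.mul_left r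
  have hgsum : HasSum g ((1 - r)⁻¹ + r * (1 - r)⁻¹) := by
    apply HasSum.of_nat_of_neg_add_one
    · rw [hgnat]; exact hasSum_geometric_of_lt_one hr0 hr
    · rw [hgneg]; exact (hasSum_geometric_of_lt_one hr0 hr).mul_left r
  have htsumg : ∑' m, g m ≤ 2 / (1 - r) := by
    rw [hgsum.tsum_eq, div_eq_mul_inv]
    have hinv : 0 ≤ (1 - r)⁻¹ := le_of_lt (inv_pos.mpr h1r)
    nlinarith
  set F : ℤ → (lp (fun _ : ℤ => ℂ) p →L[ℂ] lp (fun _ : ℤ => ℂ) p) :=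
    fun m => c m • T p m with hF
  have hFn : ∀ m, ‖F m‖ ≤ g m := fun m => by
    simp only [hF]
    calc ‖c m • T p m‖ ≤ ‖c m‖ * ‖T p m‖ := ContinuousLinearMap.opNorm_smul_le _ _
      _ ≤ ‖c m‖ * 1 := mul_le_mul_of_nonneg_left (T_norm_le p m) (norm_nonneg _)
      _ = g m := by rw [mul_one, habs]
  have hFs : Summable (fun m => ‖F m‖) :=
    Summable.of_nonneg_of_le (fun m => norm_nonneg _) hFn hg
  have hFsum : Summable F := hFs.of_norm
  set U : lp (fun _ : ℤ => ℂ) p →L[ℂ] lp (fun _ : ℤ => ℂ) p := ∑' m, F m with hU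
  have hΔ' : Δ = T p (-1) + T p 1 := by
    ext f n
    rw [hΔ]
    simp [T_apply, sub_eq_add_neg]
  have hTmul : ∀ m k : ℤ, T p m * T p k = T p (m + k) := fun m k => T_comp p m k
  have hA1 : A = z • (1 : lp (fun _ : ℤ => ℂ) p →L[ℂ] lp (fun _ : ℤ => ℂ) p) - Δ := hA
  have hTA : ∀ m : ℤ, T p m * A = z • T p m - T p (m - 1) - T p (m + 1) := by
    intro m
    rw [hA1, hΔ', mul_sub, mul_smul_comm, mul_one, mul_add, hTmul, hTmul,
      show m + -1 = m - 1 from by ring]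
    abel
  have hAT : ∀ m : ℤ, A * T p m = T p m * A := by
    intro m
    rw [hTA, hA1, hΔ', sub_mul, smul_mul_assoc, one_mul, add_mul, hTmul, hTmul,
      show (-1) + m = m - 1 from by ring, show 1 + m = m + 1 from by ring]
    abel
  have hb : ∀ k : ℤ, ∀ m : ℤ, ‖c (m + k) • T p m‖ ≤ g (m + k) := by
    intro k m
    calc ‖c (m + k) • T p m‖ ≤ ‖c (m + k)‖ * ‖T p m‖ := ContinuousLinearMap.opNorm_smul_le _ _
      _ ≤ ‖c (m + k)‖ * 1 := mul_le_mul_of_nonneg_left (T_norm_le p m) (norm_nonneg _)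
      _ = g (m + k) := by rw [mul_one, habs]
  have Ssh : ∀ k : ℤ, Summable (fun m : ℤ => c (m + k) • T p m) := by
    intro k
    apply Summable.of_norm
    have hgk : Summable (fun m : ℤ => g (m + k)) :=
      ((Equiv.addRight k).summable_iff (f := g)).mpr hg
    exact Summable.of_nonneg_of_le (fun m => norm_nonneg _) (hb k) hgk
  have S1 : Summable (fun m : ℤ => (z * c m) • T p m) := by
    apply Summable.of_norm
    apply Summable.of_nonneg_of_le (fun m => norm_nonneg _) (fun m => ?_)
      (hg.mul_left (‖z‖))
    calc ‖(z * c m) • T p m‖ ≤ ‖z * c m‖ * ‖T p m‖ := ContinuousLinearMap.opNorm_smul_le _ _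
      _ ≤ ‖z * c m‖ * 1 := mul_le_mul_of_nonneg_left (T_norm_le p m) (norm_nonneg _)
      _ = ‖z‖ * g m := by
          rw [mul_one, norm_mul, habs]
  have S2 : Summable (fun m : ℤ => c m • T p (m - 1)) := by
    apply Summable.of_norm
    apply Summable.of_nonneg_of_le (fun m => norm_nonneg _) (fun m => ?_) hg
    calc ‖c m • T p (m - 1)‖ ≤ ‖c m‖ * ‖T p (m - 1)‖ := ContinuousLinearMap.opNorm_smul_le _ _
      _ ≤ ‖c m‖ * 1 := mul_le_mul_of_nonneg_left (T_norm_le p _) (norm_nonneg _)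
      _ = g m := by rw [mul_one, habs]
  have S3 : Summable (fun m : ℤ => c m • T p (m + 1)) := by
    apply Summable.of_norm
    apply Summable.of_nonneg_of_le (fun m => norm_nonneg _) (fun m => ?_) hg
    calc ‖c m • T p (m + 1)‖ ≤ ‖c m‖ * ‖T p (m + 1)‖ := ContinuousLinearMap.opNorm_smul_le _ _
      _ ≤ ‖c m‖ * 1 := mul_le_mul_of_nonneg_left (T_norm_le p _) (norm_nonneg _)
      _ = g m := by rw [mul_one, habs]
  have e2 : ∑' m : ℤ, c m • T p (m - 1) = ∑' m : ℤ, c (m + 1) • T p m := by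
    rw [← (Equiv.subRight (1 : ℤ)).tsum_eq (fun m => c (m + 1) • T p m)]
    exact tsum_congr fun m => by
      simp only [Equiv.subRight_apply, sub_add_cancel]
  have e3 : ∑' m : ℤ, c m • T p (m + 1) = ∑' m : ℤ, c (m + -1) • T p m := by
    rw [← (Equiv.addRight (1 : ℤ)).tsum_eq (fun m => c (m + -1) • T p m)]
    exact tsum_congr fun m => by
      simp only [Equiv.coe_addRight]
      rw [show m + 1 + -1 = m from by ring]
  have hd0 : ∀ m : ℤ, m ≠ 0 → z * c m - c (m + 1) - c (m + -1) = 0 := by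
    intro m hm
    rcases hm.lt_or_gt with hneg | hpos
    · obtain ⟨k, hk⟩ : ∃ k : ℕ, m.natAbs = k + 1 := ⟨m.natAbs - 1, by omega⟩
      simp only [hc, hz]
      rw [show (m + 1).natAbs = k from by omega, show (m + -1).natAbs = k + 2 from by omega, hk]
      field_simp
      ring
    · obtain ⟨k, hk⟩ : ∃ k : ℕ, m.natAbs = k + 1 := ⟨m.natAbs - 1, by omega⟩
      simp only [hc, hz]
      rw [show (m + 1).natAbs = k + 2 from by omega, show (m + -1).natAbs = k from by omega, hk]
      field_simp
      ring
  have key : U * A = (w⁻¹ - w) • 1 := by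
    have h1 : U * A = ∑' m, F m * A := by
      have := ((ContinuousLinearMap.mul ℂ
        (lp (fun _ : ℤ => ℂ) p →L[ℂ] lp (fun _ : ℤ => ℂ) p)).flip A).map_tsum hFsum
      simpa using this
    have h2 : ∀ m : ℤ, F m * A =
        (z * c m) • T p m - c m • T p (m - 1) - c m • T p (m + 1) := by
      intro m
      simp only [hF]
      rw [smul_mul_assoc, hTA m, smul_sub, smul_sub, smul_smul, mul_comm (c m) z]
    rw [h1, tsum_congr h2,
      Summable.tsum_sub (S1.sub S2) S3, Summable.tsum_sub S1 S2, e2, e3,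
      ← Summable.tsum_sub S1 (Ssh 1), ← Summable.tsum_sub (S1.sub (Ssh 1)) (Ssh (-1))]
    have h3 : ∀ m : ℤ,
        (z * c m) • T p m - c (m + 1) • T p m - c (m + -1) • T p m =
          (z * c m - c (m + 1) - c (m + -1)) • T p m := fun m => by
      rw [sub_smul, sub_smul]
    rw [tsum_congr h3, tsum_eq_single 0 (fun m hm => by rw [hd0 m hm, zero_smul])]
    rw [T_zero p]
    rw [show (1 : lp (fun _ : ℤ => ℂ) p →L[ℂ] lp (fun _ : ℤ => ℂ) p) =
      ContinuousLinearMap.id ℂ (lp (fun _ : ℤ => ℂ) p) from rfl]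
    congr 1
    simp only [hc, hz]
    norm_num
  have hAU : A * U = U * A := by
    have h1 : A * U = ∑' m, A * F m := by
      have := ((ContinuousLinearMap.mul ℂ
        (lp (fun _ : ℤ => ℂ) p →L[ℂ] lp (fun _ : ℤ => ℂ) p)) A).map_tsum hFsum
      simpa using this
    have h2 : U * A = ∑' m, F m * A := by
      have := ((ContinuousLinearMap.mul ℂ
        (lp (fun _ : ℤ => ℂ) p →L[ℂ] lp (fun _ : ℤ => ℂ) p)).flip A).map_tsum hFsum
      simpa using this
    rw [h1, h2]
    exact tsum_congr fun m => by
      simp only [hF]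
      rw [mul_smul_comm, smul_mul_assoc, hAT m]
  have hwz : w⁻¹ - w ≠ 0 := by
    intro h
    have h1 : w⁻¹ = w := sub_eq_zero.mp h
    have h2 : w * w = 1 := by
      nth_rewrite 1 [← h1]
      exact inv_mul_cancel₀ hw0
    have h3 : r * r = 1 := by
      have := congrArg norm h2
      rwa [norm_mul, norm_one, ← hrdef] at this
    nlinarith
  refine ⟨(w⁻¹ - w)⁻¹ • U, ?_, ?_, ?_⟩
  · show (w⁻¹ - w)⁻¹ • U * A = ContinuousLinearMap.id ℂ (lp (fun _ : ℤ => ℂ) p)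
    rw [smul_mul_assoc, key, smul_smul, inv_mul_cancel₀ hwz, one_smul]
    rfl
  · show A * ((w⁻¹ - w)⁻¹ • U) = ContinuousLinearMap.id ℂ (lp (fun _ : ℤ => ℂ) p)
    rw [mul_smul_comm, hAU, key, smul_smul, inv_mul_cancel₀ hwz, one_smul]
    rfl
  · have hw1 : 0 < ‖w - 1‖ := by
      rcases eq_or_ne w 1 with h | h
      · exfalso
        have : r = 1 := by rw [hrdef, h, norm_one]
        linarith
      · exact norm_pos_iff.mpr (sub_ne_zero.mpr h)
    have hw2 : 0 < ‖w + 1‖ := by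
      rcases eq_or_ne w (-1) with h | h
      · exfalso
        have : r = 1 := by rw [hrdef, h]; simp
        linarith
      · refine norm_pos_iff.mpr ?_
        intro hcon
        exact h (by linear_combination hcon)
    have habs2 : ‖w⁻¹ - w‖ = ‖w - 1‖ * ‖w + 1‖ / r := by
      have hfac : w⁻¹ - w = (w - 1) * (w + 1) / (-w) := by
        rw [eq_div_iff (neg_ne_zero.mpr hw0)]
        field_simp
        ring
      rw [hfac, norm_div, norm_mul, norm_neg, ← hrdef]
    have hUnorm : ‖U‖ ≤ 2 / (1 - r) :=
      (norm_tsum_le_tsum_norm hFs).trans ((Summable.tsum_le_tsum hFn hFs hg).trans htsumg)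
    refine le_trans (ContinuousLinearMap.opNorm_smul_le ((w⁻¹ - w)⁻¹) U) ?_
    rw [norm_inv, habs2, inv_div]
    refine le_trans (mul_le_mul_of_nonneg_left hUnorm (by positivity)) ?_
    have ha0 : 0 < ‖w - 1‖ * ‖w + 1‖ := mul_pos hw1 hw2
    have : r / (‖w - 1‖ * ‖w + 1‖) * (2 / (1 - r)) =
        2 * r / (‖w - 1‖ * ‖w + 1‖ * (1 - r)) := by
      field_simp
    rw [this]

end ResolventAux
end

section
/- Let w ∈ 𝔻 \ {0}, set z := w + w⁻¹, and let τ > 0. Then (1−|w|)^{3+τ} · |(w²−1)/w|^{1+τ} ≥ (2/(1+√2))^{3+τ} · dist(z, [−2, 2])^{3+τ} / |z² − 4|. -/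
open Complex Metric Set

lemma key (r X s : ℝ) (hs : s*s = 2) (hs1 : 1 ≤ s) (hr0 : 0 ≤ r) (hr1 : r ≤ 1)
    (hX : -r^2 ≤ X) (hX' : X ≤ r^2) :
    r^4 - 2*r*X + r^2 ≤ ((1+s)/2)^2 * r^2 * (r^4 - 2*X + 1) := by
  rcases eq_or_lt_of_le hr0 with h | hr
  · have hr' : r = 0 := h.symm
    subst hr'
    have : X = 0 := le_antisymm (by simpa using hX') (by simpa using hX)
    subst this
    nlinarith [sq_nonneg (1+s)]
  · have h1 : 0 ≤ (X + r^2) * r^2 * ((1-r)^2 * (((1+s)/2)^2 * (1+r)^2 - 1)) := by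
      apply mul_nonneg (mul_nonneg (by linarith) (sq_nonneg r))
      apply mul_nonneg (sq_nonneg _)
      nlinarith [sq_nonneg (1+r), sq_nonneg r]
    have h2 : 0 ≤ (r^2 - X) * r^2 * (((1+s)/2) * ((r - (s-1))^2 * (((1+s)/2) * (1+r^2) + (1+r)))) := by
      apply mul_nonneg (mul_nonneg (by linarith) (sq_nonneg r))
      apply mul_nonneg (by linarith)
      apply mul_nonneg (sq_nonneg _)
      nlinarith
    have hid : 2*r^2*(((1+s)/2)^2 * r^2 * (r^4 - 2*X + 1) - (r^4 - 2*r*X + r^2)) =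
        (X + r^2) * r^2 * ((1-r)^2 * (((1+s)/2)^2 * (1+r)^2 - 1))
        + (r^2 - X) * r^2 * (((1+s)/2) * ((r - (s-1))^2 * (((1+s)/2) * (1+r^2) + (1+r)))) := by
      linear_combination (-3/4*r^2*X + 1/2*r^2*X*s + 1/4*r^2*X*s^2 - 2*r^3*X + 3/4*r^4
        - 1/2*r^4*s - 1/4*r^4*s^2 - 5/4*r^4*X + 1/4*r^4*X*s^2 + 2*r^5 - 1/2*r^5*X
        - 1/2*r^5*X*s + 5/4*r^6 - 1/4*r^6*s^2 + 1/2*r^7 + 1/2*r^7*s) * hs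
    nlinarith [hid, h1, h2, mul_pos hr hr]

set_option maxHeartbeats 1000000 in
/-- For `w ∈ 𝔻 \ {0}`, `z = w + w⁻¹` and `τ > 0`:
`(1-|w|)^{3+τ}·|(w²-1)/w|^{1+τ} ≥ (2/(1+√2))^{3+τ}·dist(z,[-2,2])^{3+τ}/|z²-4|`. -/
theorem weight_transfer (w : ℂ) (hw : w ∈ ball (0 : ℂ) 1) (hw0 : w ≠ 0)
    (τ : ℝ) (hτ : 0 < τ) :
    (2 / (1 + Real.sqrt 2)) ^ (3 + τ) *
        (Metric.infDist (w + w⁻¹) ((fun x : ℝ => (x : ℂ)) '' Set.Icc (-2 : ℝ) 2)) ^ (3 + τ) /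
        ‖(w + w⁻¹) ^ 2 - 4‖ ≤
      (1 - ‖w‖) ^ (3 + τ) * ‖(w ^ 2 - 1) / w‖ ^ (1 + τ) := by
  set r : ℝ := ‖w‖ with hr_def
  have hr0 : 0 < r := by simpa [hr_def] using (norm_pos_iff.mpr hw0)
  have hr1 : r < 1 := by simpa [hr_def] using (mem_ball_zero_iff.mp hw)
  have hrC : (r : ℂ) ≠ 0 := by exact_mod_cast hr0.ne'
  have hs2 : Real.sqrt 2 * Real.sqrt 2 = 2 := Real.mul_self_sqrt (by norm_num)
  have hs1 : (1:ℝ) ≤ Real.sqrt 2 := by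
    nlinarith [Real.sq_sqrt (by norm_num : (2:ℝ) ≥ 0), Real.sqrt_nonneg 2]
  set s := Real.sqrt 2 with hs_def
  -- w² ≠ 1
  have hw2 : ‖w^2‖ = r^2 := by rw [norm_pow]
  have hane : (0:ℝ) < ‖w^2 - 1‖ := by
    rw [norm_pos_iff, sub_ne_zero]
    intro h
    rw [h] at hw2
    simp at hw2
    nlinarith
  -- conjugate relation
  have hconj : (starRingEnd ℂ) w = (r:ℂ)^2 / w := by
    rw [eq_div_iff hw0]
    rw [mul_comm]
    rw [Complex.mul_conj]
    norm_cast
    rw [Complex.normSq_eq_norm_sq]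
  -- the test point on [-2,2]
  set t : ℝ := 2 * w.re / r with ht_def
  have htmem : (t : ℂ) ∈ ((fun x : ℝ => (x : ℂ)) '' Set.Icc (-2 : ℝ) 2) := by
    refine ⟨t, ?_, rfl⟩
    have hre : |w.re| ≤ r := Complex.abs_re_le_norm w
    constructor
    · rw [ht_def, le_div_iff₀ hr0]
      cases' abs_le.mp hre with h1 h2
      nlinarith
    · rw [ht_def, div_le_iff₀ hr0]
      cases' abs_le.mp hre with h1 h2
      nlinarith
  -- distance computation
  have hzt : w + w⁻¹ - (t : ℂ) = ((1 - r : ℝ) : ℂ) * ((r:ℂ) - w^2) / ((r:ℂ) * w) := by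
    have hre : ((2 * w.re : ℝ) : ℂ) = w + (r:ℂ)^2 / w := by
      rw [← hconj, Complex.add_conj]
    rw [ht_def]
    push_cast
    field_simp
    field_simp at hre
    push_cast at hre
    linear_combination (-1:ℂ) * hre
  have hdist : dist (w + w⁻¹) ((t : ℂ)) = (1 - r) * ‖(r:ℂ) - w^2‖ / (r * r) := by
    rw [Complex.dist_eq, hzt, norm_div, norm_mul, norm_mul, Complex.norm_real, Real.norm_eq_abs,
      Complex.norm_real, Real.norm_eq_abs, _root_.abs_of_pos hr0,
      _root_.abs_of_nonneg (by linarith : (0:ℝ) ≤ 1 - r), ← hr_def]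
  -- core estimate |r - w²| ≤ ((1+√2)/2) * r * |w²-1|
  set X : ℝ := (w^2).re with hX_def
  set Y : ℝ := (w^2).im with hY_def
  have hXb : |X| ≤ r^2 := by
    rw [← hw2]; exact Complex.abs_re_le_norm _
  have hn2 : X^2 + Y^2 = r^4 := by
    have h := Complex.sq_norm (w^2)
    rw [hw2, Complex.normSq_apply] at h
    nlinarith [h]
  have hL' : ‖(r:ℂ) - w^2‖ ^ 2 = r^2 - 2*r*X + r^4 := by
    rw [Complex.sq_norm, Complex.normSq_apply]
    simp only [Complex.sub_re, Complex.sub_im, Complex.ofReal_re, Complex.ofReal_im]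
    rw [← hX_def, ← hY_def]
    linear_combination hn2
  have hR' : ‖w^2 - 1‖ ^ 2 = r^4 - 2*X + 1 := by
    rw [Complex.sq_norm, Complex.normSq_apply]
    simp only [Complex.sub_re, Complex.sub_im, Complex.one_re, Complex.one_im]
    rw [← hX_def, ← hY_def]
    linear_combination hn2
  have hkey := key r X s hs2 hs1 hr0.le hr1.le (abs_le.mp hXb).1 (abs_le.mp hXb).2
  have hsq : ‖(r:ℂ) - w^2‖ ^ 2 ≤ (((1+s)/2) * (r * ‖w^2 - 1‖))^2 := by
    have he : (((1+s)/2) * (r * ‖w^2 - 1‖))^2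
        = ((1+s)/2)^2 * r^2 * (‖w^2 - 1‖)^2 := by ring
    rw [he, hL', hR']
    linarith [hkey]
  have habs_le : ‖(r:ℂ) - w^2‖ ≤ ((1+s)/2) * (r * ‖w^2 - 1‖) := by
    have hb : 0 ≤ ((1+s)/2) * (r * ‖w^2 - 1‖) := by positivity
    nlinarith [hsq, norm_nonneg ((r:ℂ) - w^2), hb]
  -- distance bound
  have ha_eq : ‖(w ^ 2 - 1) / w‖ = ‖w^2 - 1‖ / r := by
    rw [norm_div, ← hr_def]
  have hd1 : Metric.infDist (w + w⁻¹) ((fun x : ℝ => (x : ℂ)) '' Set.Icc (-2 : ℝ) 2)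
      ≤ (1 - r) * ‖(r:ℂ) - w^2‖ / (r * r) := by
    rw [← hdist]; exact Metric.infDist_le_dist_of_mem htmem
  have hd2 : Metric.infDist (w + w⁻¹) ((fun x : ℝ => (x : ℂ)) '' Set.Icc (-2 : ℝ) 2)
      ≤ ((1+s)/2) * ((1 - r) * ‖(w ^ 2 - 1) / w‖) := by
    refine hd1.trans ?_
    rw [ha_eq]
    calc (1 - r) * ‖(r:ℂ) - w^2‖ / (r * r)
        ≤ (1 - r) * (((1+s)/2) * (r * ‖w^2 - 1‖)) / (r * r) := by
          gcongr
      _ = ((1+s)/2) * ((1 - r) * (‖w^2 - 1‖ / r)) := by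
          field_simp
  set d := Metric.infDist (w + w⁻¹) ((fun x : ℝ => (x : ℂ)) '' Set.Icc (-2 : ℝ) 2) with hd_def
  set a := ‖(w ^ 2 - 1) / w‖ with ha_def
  have ha : 0 < a := by rw [ha_eq]; positivity
  have hd0 : 0 ≤ d := Metric.infDist_nonneg
  have h2s : (0:ℝ) < 1 + s := by linarith
  have hCd : (2/(1+s)) * d ≤ (1 - r) * a := by
    calc (2/(1+s)) * d ≤ (2/(1+s)) * (((1+s)/2) * ((1 - r) * a)) := by
          apply mul_le_mul_of_nonneg_left hd2 (by positivity)
      _ = (1 - r) * a := by field_simp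
  -- |z²-4| = a²
  have hz4 : ‖(w + w⁻¹)^2 - 4‖ = a ^ 2 := by
    have hw' : w * w⁻¹ = 1 := mul_inv_cancel₀ hw0
    have hid2 : (w + w⁻¹)^2 - 4 = ((w ^ 2 - 1) / w)^2 := by
      rw [div_pow, eq_div_iff (pow_ne_zero 2 hw0)]
      linear_combination (2*w^2 + w⁻¹*w + 1) * hw'
    rw [ha_def, ← norm_pow, hid2]
  -- final assembly with rpow
  have hK : (0:ℝ) ≤ 2/(1+s) := by positivity
  have h1 : ((2/(1+s)) * d) ^ (3+τ) ≤ ((1 - r) * a) ^ (3+τ) :=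
    Real.rpow_le_rpow (by positivity) hCd (by linarith)
  rw [hz4, ← Real.mul_rpow hK hd0, div_le_iff₀ (by positivity : (0:ℝ) < a^2)]
  calc ((2/(1+s)) * d) ^ (3+τ) ≤ ((1 - r) * a) ^ (3+τ) := h1
    _ = (1 - r) ^ (3+τ) * a ^ (3+τ) := Real.mul_rpow (by linarith) ha.le
    _ = (1 - r) ^ (3+τ) * (a ^ (1+τ) * a ^ (2:ℕ)) := by
        rw [← Real.rpow_natCast a 2, ← Real.rpow_add ha]
        congr 2
        ring
    _ = (1 - r) ^ (3+τ) * a ^ (1+τ) * a ^ 2 := by ring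
end

section
/- Let τ > 0, A ≥ 0, and let S ⊆ ℂ \ [−2, 2] be a set such that for every finite subset F ⊆ S one has ∑_{z∈F} dist(z, [−2, 2])^{3+τ} / |z² − 4| ≤ A. Let 0 < r < R and define M := {z ∈ ℂ : Re z < −2 and r < |z + 2| < R}. Then S ∩ M is finite with cardinality #(S ∩ M) ≤ (R(R + 4)/r^{3+τ}) · A. -/
open Set Metric

/-- Eigenvalue counting in the region `M = {Re z < -2, r < |z+2| < R}`:
a Lieb–Thirring type bound with constant `A` implies
`#(S ∩ M) ≤ (R(R+4)/r^{3+τ})·A`. -/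
theorem eigenvalue_count_left (τ : ℝ) (hτ : 0 < τ) (A : ℝ) (hA : 0 ≤ A)
    (S : Set ℂ) (hS : S ⊆ ((fun x : ℝ => (x : ℂ)) '' Set.Icc (-2 : ℝ) 2)ᶜ)
    (hsum : ∀ F : Finset ℂ, ↑F ⊆ S →
      ∑ z ∈ F, (Metric.infDist z ((fun x : ℝ => (x : ℂ)) '' Set.Icc (-2 : ℝ) 2)) ^ (3 + τ) /
        ‖z ^ 2 - 4‖ ≤ A)
    (r R : ℝ) (hr : 0 < r) (hrR : r < R) :
    (S ∩ {z : ℂ | z.re < -2 ∧ r < ‖z + 2‖ ∧ ‖z + 2‖ < R}).Finite ∧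
    ((S ∩ {z : ℂ | z.re < -2 ∧ r < ‖z + 2‖ ∧
        ‖z + 2‖ < R}).ncard : ℝ) ≤ R * (R + 4) / r ^ (3 + τ) * A := by
  set I := ((fun x : ℝ => (x : ℂ)) '' Set.Icc (-2 : ℝ) 2) with hIdef
  set M := {z : ℂ | z.re < -2 ∧ r < ‖z + 2‖ ∧ ‖z + 2‖ < R} with hMdef
  have hR : 0 < R := hr.trans hrR
  have hR4 : 0 < R * (R + 4) := by positivity
  have hp : 0 < r ^ (3 + τ) := Real.rpow_pos_of_pos hr _
  set p := r ^ (3 + τ) with hpdef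
  set c := p / (R * (R + 4)) with hcdef
  have hc : 0 < c := by positivity
  have hIne : I.Nonempty := ⟨((-2 : ℝ) : ℂ), ⟨-2, by norm_num, rfl⟩⟩
  -- pointwise lower bound on the summand for z ∈ M
  have key : ∀ z ∈ M, c ≤ (Metric.infDist z I) ^ (3 + τ) / ‖z ^ 2 - 4‖ := by
    intro z hz
    obtain ⟨hre, hlo, hhi⟩ := hz
    have hd : r ≤ Metric.infDist z I := by
      refine le_of_not_gt fun hcon => ?_
      obtain ⟨y, ⟨x, hx, rfl⟩, hdy⟩ := (infDist_lt_iff hIne).mp hcon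
      revert hdy
      simp only [imp_false, not_lt]
      have h1 : ‖z + 2‖ ≤ ‖z - x‖ := by
        have hsq : (‖z + 2‖) ^ 2 ≤ (‖z - x‖) ^ 2 := by
          rw [Complex.sq_norm, Complex.sq_norm, Complex.normSq_apply, Complex.normSq_apply]
          simp only [Complex.add_re, Complex.add_im, Complex.sub_re, Complex.sub_im,
            Complex.ofReal_re, Complex.ofReal_im, Complex.re_ofNat, Complex.im_ofNat]
          nlinarith [hx.1, hx.2, hre]
        exact (pow_le_pow_iff_left₀ (norm_nonneg _)
          (norm_nonneg _) two_ne_zero).mp hsq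
      calc r ≤ ‖z + 2‖ := hlo.le
        _ ≤ ‖z - x‖ := h1
        _ = dist z (x : ℂ) := by rw [Complex.dist_eq]
    have habs2 : ‖z - 2‖ ≤ ‖z + 2‖ + 4 := by
      calc ‖z - 2‖ = ‖(z + 2) + (-4)‖ := by ring_nf
        _ ≤ ‖z + 2‖ + ‖-4‖ := norm_add_le _ _
        _ = ‖z + 2‖ + 4 := by norm_num
    have hzsq : ‖z ^ 2 - 4‖ = ‖z + 2‖ * ‖z - 2‖ := by
      rw [← norm_mul]; ring_nf
    have hne2 : (0 : ℝ) < ‖z - 2‖ := by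
      rw [norm_pos_iff]
      intro h
      have h2 := congrArg Complex.re h
      simp only [Complex.sub_re, Complex.zero_re] at h2
      have : (2 : ℂ).re = 2 := by norm_num
      rw [this] at h2
      linarith
    have hpos : 0 < ‖z ^ 2 - 4‖ := by
      rw [hzsq]; exact mul_pos (hr.trans hlo) hne2
    have hub : ‖z ^ 2 - 4‖ ≤ R * (R + 4) := by
      rw [hzsq]
      have h1 : ‖z + 2‖ ≤ R := hhi.le
      have h2 : ‖z - 2‖ ≤ R + 4 := le_trans habs2 (by linarith)
      exact mul_le_mul h1 h2 (norm_nonneg _) hR.le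
    have hnum : p ≤ (Metric.infDist z I) ^ (3 + τ) :=
      Real.rpow_le_rpow hr.le hd (by linarith)
    exact div_le_div₀ (Real.rpow_nonneg (le_trans hr.le hd) _) hnum hpos hub
  -- cardinality bound for finite subsets
  have count : ∀ F : Finset ℂ, ↑F ⊆ S ∩ M → (F.card : ℝ) ≤ R * (R + 4) / p * A := by
    intro F hF
    have h1 : (F.card : ℝ) * c ≤ A := by
      calc (F.card : ℝ) * c = ∑ _z ∈ F, c := by rw [Finset.sum_const, nsmul_eq_mul]
        _ ≤ ∑ z ∈ F, (Metric.infDist z I) ^ (3 + τ) / ‖z ^ 2 - 4‖ :=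
            Finset.sum_le_sum (fun z hz => key z (hF hz).2)
        _ ≤ A := hsum F (fun z hz => (hF hz).1)
    have h2 : (F.card : ℝ) ≤ A / c := (le_div_iff₀ hc).mpr h1
    have h3 : A / c = R * (R + 4) / p * A := by
      rw [hcdef]; field_simp
    linarith [h3 ▸ h2]
  have hfin : (S ∩ M).Finite := by
    by_contra h
    obtain ⟨F, hFsub, hFcard⟩ := Set.Infinite.exists_subset_card_eq h
      (⌈R * (R + 4) / p * A⌉₊ + 1)
    have := count F hFsub
    rw [hFcard] at this
    push_cast at this
    linarith [Nat.le_ceil (R * (R + 4) / p * A)]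
  refine ⟨hfin, ?_⟩
  rw [Set.ncard_eq_toFinset_card _ hfin]
  exact count hfin.toFinset (by simp)
end

section
/- Let τ > 0, A ≥ 0, and let S ⊆ ℂ \ [−2, 2] be a set such that for every finite subset F ⊆ S one has ∑_{z∈F} dist(z, [−2, 2])^{3+τ} / |z² − 4| ≤ A. Let 0 < r < R and define N := {z ∈ ℂ : −2 ≤ Re z ≤ 2 and r < |Im z| < R}. Then S ∩ N is finite with cardinality #(S ∩ N) ≤ ((16 + R²)/r^{3+τ}) · A. -/
open Set Metric

/-- Eigenvalue counting in the region `N = {-2 ≤ Re z ≤ 2, r < |Im z| < R}`: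
a Lieb–Thirring type bound with constant `A` implies
`#(S ∩ N) ≤ ((16+R²)/r^{3+τ})·A`. -/
theorem eigenvalue_count_middle (τ : ℝ) (hτ : 0 < τ) (A : ℝ) (hA : 0 ≤ A)
    (S : Set ℂ) (hS : S ⊆ ((fun x : ℝ => (x : ℂ)) '' Set.Icc (-2 : ℝ) 2)ᶜ)
    (hsum : ∀ F : Finset ℂ, ↑F ⊆ S →
      ∑ z ∈ F, (Metric.infDist z ((fun x : ℝ => (x : ℂ)) '' Set.Icc (-2 : ℝ) 2)) ^ (3 + τ) /
        ‖z ^ 2 - 4‖ ≤ A)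
    (r R : ℝ) (hr : 0 < r) (hrR : r < R) :
    (S ∩ {z : ℂ | -2 ≤ z.re ∧ z.re ≤ 2 ∧ r < |z.im| ∧ |z.im| < R}).Finite ∧
    ((S ∩ {z : ℂ | -2 ≤ z.re ∧ z.re ≤ 2 ∧ r < |z.im| ∧
        |z.im| < R}).ncard : ℝ) ≤ (16 + R ^ 2) / r ^ (3 + τ) * A := by
  set I : Set ℂ := ((fun x : ℝ => (x : ℂ)) '' Set.Icc (-2 : ℝ) 2) with hI
  set N : Set ℂ := {z : ℂ | -2 ≤ z.re ∧ z.re ≤ 2 ∧ r < |z.im| ∧ |z.im| < R} with hN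
  have hp : (0 : ℝ) < 3 + τ := by linarith
  have hrp : (0 : ℝ) < r ^ (3 + τ) := Real.rpow_pos_of_pos hr _
  have hRp : (0 : ℝ) < 16 + R ^ 2 := by nlinarith [sq_nonneg R]
  have hIne : I.Nonempty := ⟨(0 : ℂ), ⟨0, by norm_num, by norm_num⟩⟩
  set c : ℝ := r ^ (3 + τ) / (16 + R ^ 2) with hc
  have hcpos : 0 < c := div_pos hrp hRp
  -- key pointwise bound
  have key : ∀ z ∈ S ∩ N,
      c ≤ (Metric.infDist z I) ^ (3 + τ) / ‖z ^ 2 - 4‖ := by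
    rintro z ⟨hzS, hzre1, hzre2, hzim1, hzim2⟩
    have him : z.im ≠ 0 := by
      intro h; rw [h] at hzim1; simp at hzim1; linarith
    have hz2 : z - 2 ≠ 0 := by
      intro h
      have : z = 2 := by linear_combination h
      rw [this] at him; simp at him
    have hz2' : z + 2 ≠ 0 := by
      intro h
      have : z = -2 := by linear_combination h
      rw [this] at him; simp at him
    have hne : z ^ 2 - 4 ≠ 0 := by
      have : z ^ 2 - 4 = (z - 2) * (z + 2) := by ring
      rw [this]; exact mul_ne_zero hz2 hz2'
    have habs : 0 < ‖z ^ 2 - 4‖ := by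
      simpa using (norm_pos_iff.mpr hne)
    -- dist lower bound
    have hd : r ≤ Metric.infDist z I := by
      by_contra h
      push_neg at h
      obtain ⟨y, ⟨x, hx, rfl⟩, hy⟩ :=
        (Metric.infDist_lt_iff hIne).1 h
      have : |z.im| ≤ dist z (x : ℂ) := by
        have := Complex.abs_im_le_norm (z - (x : ℂ))
        simpa [Complex.dist_eq, Complex.sub_im] using this
      linarith
    have hd0 : 0 ≤ Metric.infDist z I := le_trans hr.le hd
    have hnum : r ^ (3 + τ) ≤ (Metric.infDist z I) ^ (3 + τ) :=
      Real.rpow_le_rpow hr.le hd hp.le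
    -- denominator upper bound
    have hden : ‖z ^ 2 - 4‖ ≤ 16 + R ^ 2 := by
      have h1 : ‖z ^ 2 - 4‖ ≤ ‖z ^ 2‖ + ‖(4 : ℂ)‖ :=
        (norm_sub_le _ _).trans_eq rfl
      have h2 : ‖z ^ 2‖ = z.re ^ 2 + z.im ^ 2 := by
        rw [norm_pow, Complex.sq_norm, Complex.normSq_apply]; ring
      have hre : z.re ^ 2 ≤ 4 := by nlinarith
      have hime : z.im ^ 2 ≤ R ^ 2 := by
        have h3 : |z.im| ^ 2 ≤ R ^ 2 := by nlinarith [abs_nonneg z.im]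
        simpa [sq_abs] using h3
      have h4 : ‖(4 : ℂ)‖ = 4 := by norm_num
      rw [h2, h4] at h1
      linarith
    exact div_le_div₀ (Real.rpow_nonneg hd0 _) hnum habs hden
  -- any finite subset of S ∩ N has card bounded
  have card_bd : ∀ F : Finset ℂ, ↑F ⊆ S ∩ N → (F.card : ℝ) ≤ A / c := by
    intro F hF
    have hFS : ↑F ⊆ S := hF.trans (Set.inter_subset_left)
    have h1 : (F.card : ℝ) * c ≤
        ∑ z ∈ F, (Metric.infDist z I) ^ (3 + τ) / ‖z ^ 2 - 4‖ := by
      calc (F.card : ℝ) * c = ∑ _z ∈ F, c := by rw [Finset.sum_const, nsmul_eq_mul]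
        _ ≤ _ := Finset.sum_le_sum fun z hz => key z (hF hz)
    have h2 := hsum F hFS
    rw [le_div_iff₀ hcpos]
    exact h1.trans h2
  have hfin : (S ∩ N).Finite := by
    by_contra hinf
    have hinf' : (S ∩ N).Infinite := hinf
    obtain ⟨F, hF, hcard⟩ := hinf'.exists_subset_card_eq (⌊A / c⌋₊ + 1)
    have := card_bd F hF
    rw [hcard] at this
    have h3 : A / c < (⌊A / c⌋₊ + 1 : ℕ) := by
      push_cast
      exact Nat.lt_floor_add_one _
    linarith
  refine ⟨hfin, ?_⟩
  have h := card_bd hfin.toFinset (by simp)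
  rw [Set.ncard_eq_toFinset_card _ hfin]
  have : A / c = (16 + R ^ 2) / r ^ (3 + τ) * A := by
    rw [hc]; field_simp
  rw [this] at h
  exact_mod_cast h
end
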